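/- arXiv:1704.00971 — 4 statements merged into one kernel-verified Lean document; each statement's English description precedes it below -/
import Mathlib

section
/- The map m ↦ Q(m(r)dr), defined on the set of measurable functions m:(0,∞)→[0,1], is convex, and it is sequentially lower semicontinuous with respect to vague convergence of the associated measures: if m, m₁, m₂, … are measurable functions from (0,∞) to [0,1] such that ∫₀^∞ G(r) mₙ(r) dr → ∫₀^∞ G(r) m(r) dr for every continuous compactly supported G:(0,∞)→ℝ, then Q(m(r)dr) ≤ liminf_{n→∞} Q(mₙ(r)dr). -/
open MeasureTheory Set Filter
open scoped ENNReal

noncomputable section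

/-- `G` is continuously differentiable with compact support contained in `(0, ∞)`. -/
def IsC1K (G : ℝ → ℝ) : Prop :=
  ContDiff ℝ 1 G ∧ HasCompactSupport G ∧ tsupport G ⊆ Set.Ioi 0

/-- The expression inside the supremum defining the energy:
`-∫₀^∞ G'(r) m(r) dr - ∫₀^∞ σ(m(r)) G(r)² dr` with `σ(a) = a(1-a)`. -/
def energyExpr (m G : ℝ → ℝ) : ℝ :=
  (- ∫ r in Set.Ioi (0:ℝ), deriv G r * m r)
    - ∫ r in Set.Ioi (0:ℝ), (m r * (1 - m r)) * (G r) ^ 2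

/-- The energy functional `Q(m(r)dr)`, with values in `ℝ≥0∞`. -/
def energy (m : ℝ → ℝ) : ℝ≥0∞ :=
  ⨆ G : {G : ℝ → ℝ // IsC1K G}, ENNReal.ofReal (energyExpr m G.1)

lemma intOn {φ f : ℝ → ℝ} (hφc : Continuous φ) (hφs : HasCompactSupport φ)
    (hf : Measurable f) {C : ℝ} (hb : ∀ r ∈ Set.Ioi (0:ℝ), |f r| ≤ C) :
    IntegrableOn (fun r => φ r * f r) (Set.Ioi 0) := by
  have hg : IntegrableOn (fun r => |φ r| * C) (Set.Ioi 0) :=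
    (((hφc.abs).integrable_of_hasCompactSupport hφs.abs).mul_const C).integrableOn
  refine Integrable.mono' hg ((hφc.measurable.mul hf).aestronglyMeasurable) ?_
  filter_upwards [ae_restrict_mem measurableSet_Ioi] with r hr
  rw [Real.norm_eq_abs, abs_mul]
  exact mul_le_mul_of_nonneg_left (hb r hr) (abs_nonneg _)

lemma intOn' {φ f : ℝ → ℝ} (hφc : Continuous φ) (hφs : HasCompactSupport φ)
    (hf : Measurable f) {C : ℝ} (hb : ∀ r ∈ Set.Ioi (0:ℝ), |f r| ≤ C) :
    IntegrableOn (fun r => f r * φ r) (Set.Ioi 0) :=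
  (intOn hφc hφs hf hb).congr (Filter.Eventually.of_forall fun r => mul_comm _ _)

-- properties of a C1K function
lemma derivG_props {G : ℝ → ℝ} (hG : IsC1K G) :
    Continuous (deriv G) ∧ HasCompactSupport (deriv G) := by
  exact ⟨hG.1.continuous_deriv le_rfl, hG.2.1.deriv⟩

lemma sigma_bound {a : ℝ} (h : a ∈ Set.Icc (0:ℝ) 1) : |a * (1 - a)| ≤ 1 := by
  rw [abs_le]; constructor <;> nlinarith [h.1, h.2]
lemma clamp_close {x y : ℝ} (hx0 : 0 ≤ x) (hx1 : x ≤ 1) :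
    |x - max 0 (min 1 y)| ≤ |x - y| := by
  rcases le_total y 0 with hy | hy
  · rw [min_eq_right (hy.trans zero_le_one), max_eq_left hy, sub_zero,
      abs_of_nonneg hx0, abs_of_nonneg (by linarith)]
    linarith
  rcases le_total 1 y with hy1 | hy1
  · rw [min_eq_left hy1, max_eq_right zero_le_one, abs_of_nonpos (by linarith),
      abs_of_nonpos (by linarith)]
    linarith
  · rw [min_eq_right hy1, max_eq_right hy]
lemma approx_lemma (m : ℝ → ℝ) (hm : Measurable m)
    (hm01 : ∀ r ∈ Set.Ioi (0:ℝ), m r ∈ Set.Icc (0:ℝ) 1)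
    (φ : ℝ → ℝ) (hφc : Continuous φ) (hφs : HasCompactSupport φ)
    {ε : ℝ} (hε : 0 < ε) :
    ∃ b : ℝ → ℝ, Continuous b ∧ (∀ r, b r ∈ Set.Icc (0:ℝ) 1) ∧
      ∫ r in Set.Ioi (0:ℝ), (m r - b r)^2 * φ r ^ 2 ≤ ε := by
  -- bound on φ^2
  have hφ2s : HasCompactSupport (fun r => φ r ^ 2) :=
    hφs.comp_left (g := fun x : ℝ => x ^ 2) (by norm_num)
  obtain ⟨C, hC⟩ : ∃ C, ∀ x, φ x ^ 2 ≤ C := by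
    obtain ⟨C, hC⟩ := (hφc.pow 2).bounded_above_of_compact_support hφ2s
    exact ⟨C, fun x => (le_abs_self _).trans ((Real.norm_eq_abs _) ▸ hC x)⟩
  have hC0 : 0 ≤ C := le_trans (sq_nonneg (φ 0)) (hC 0)
  -- radius
  obtain ⟨R, hR⟩ : ∃ R, tsupport φ ⊆ Set.Icc (-R) R := by
    obtain ⟨R, hR⟩ := hφs.isBounded.subset_closedBall 0
    exact ⟨R, fun x hx => by simpa [Real.closedBall_eq_Icc, abs_le] using hR hx⟩
  set h : ℝ → ℝ := Set.indicator (Set.Ioc 0 R) m with hh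
  have hhmeas : Measurable h := hm.indicator measurableSet_Ioc
  have hh01 : ∀ r, h r ∈ Set.Icc (0:ℝ) 1 := by
    intro r
    by_cases hr : r ∈ Set.Ioc 0 R
    · simp only [hh, Set.indicator_of_mem hr]
      exact hm01 r hr.1
    · simp [hh, Set.indicator_of_notMem hr]
  have hhint : Integrable h := by
    refine Integrable.mono' (g := Set.indicator (Set.Ioc 0 R) (fun _ => (1:ℝ))) ?_
      hhmeas.aestronglyMeasurable ?_
    · rw [integrable_indicator_iff measurableSet_Ioc]
      exact integrableOn_const measure_Ioc_lt_top.ne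
    · refine Filter.Eventually.of_forall fun r => ?_
      by_cases hr : r ∈ Set.Ioc 0 R
      · simp only [hh, Set.indicator_of_mem hr, Real.norm_eq_abs]
        have := hm01 r hr.1
        rw [abs_of_nonneg this.1]; exact this.2
      · simp [hh, Set.indicator_of_notMem hr]
  obtain ⟨g, hgs, hgint, hgc, hgi⟩ :=
    hhint.exists_hasCompactSupport_integral_sub_le
      (ε := ε / (C + 1)) (div_pos hε (by linarith))
  set b : ℝ → ℝ := fun r => max 0 (min 1 (g r)) with hb
  refine ⟨b, continuous_const.max (continuous_const.min hgc), fun r => ⟨le_max_left _ _,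
    max_le (by norm_num) (min_le_left _ _)⟩, ?_⟩
  -- pointwise: on Ioi 0, (m-b)^2 φ^2 = (h-b)^2 φ^2 ≤ |h-g| * C
  have key : ∀ r ∈ Set.Ioi (0:ℝ), (m r - b r)^2 * φ r ^ 2 ≤ |h r - g r| * C := by
    intro r hr
    by_cases hφr : φ r = 0
    · rw [hφr]
      simpa using mul_nonneg (abs_nonneg (h r - g r)) hC0
    · have hrsupp : r ∈ tsupport φ := subset_closure (by simp [Function.mem_support, hφr])
      have hrR : r ∈ Set.Ioc 0 R := ⟨hr, (hR hrsupp).2⟩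
      have hhr : h r = m r := Set.indicator_of_mem hrR m
      have h1 : |m r - b r| ≤ |h r - g r| := by
        rw [hhr] at *
        exact clamp_close (hm01 r hr).1 (hm01 r hr).2
      have h2 : |m r - b r| ≤ 1 := by
        have hm' := hm01 r hr
        have hb' : b r ∈ Set.Icc (0:ℝ) 1 := ⟨le_max_left _ _,
          max_le (by norm_num) (min_le_left _ _)⟩
        rw [abs_le]; constructor <;> [linarith [hm'.1, hb'.2]; linarith [hm'.2, hb'.1]]
      calc (m r - b r)^2 * φ r ^ 2 ≤ (|m r - b r| * 1) * C := by
            rw [← sq_abs]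
            exact mul_le_mul (by nlinarith [abs_nonneg (m r - b r)]) (hC r) (sq_nonneg _)
              (mul_nonneg (abs_nonneg _) zero_le_one)
        _ ≤ |h r - g r| * C := by
            rw [mul_one]; exact mul_le_mul_of_nonneg_right h1 hC0
  have hint1 : IntegrableOn (fun r => |h r - g r| * C) (Set.Ioi 0) :=
    (((hhint.sub hgi).abs.mul_const C)).integrableOn
  have hint2 : IntegrableOn (fun r => (m r - b r)^2 * φ r ^ 2) (Set.Ioi 0) := by
    have : IntegrableOn (fun r => (φ r ^ 2) * ((m r - b r)^2)) (Set.Ioi 0) := by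
      refine Integrable.mono' (((((hφc.pow 2).abs).integrable_of_hasCompactSupport
        hφ2s.abs).mul_const 1).integrableOn) ?_ ?_
      · exact ((hφc.pow 2).measurable.mul ((hm.sub
          (continuous_const.max (continuous_const.min hgc)).measurable).pow_const 2)).aestronglyMeasurable
      · filter_upwards [ae_restrict_mem measurableSet_Ioi] with r hr
        rw [Real.norm_eq_abs, abs_mul]
        refine mul_le_mul_of_nonneg_left ?_ (abs_nonneg _)
        rw [abs_of_nonneg (sq_nonneg _), ← sq_abs]
        have hm' := hm01 r hr
        have hb' : b r ∈ Set.Icc (0:ℝ) 1 := ⟨le_max_left _ _,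
          max_le (by norm_num) (min_le_left _ _)⟩
        nlinarith [abs_nonneg (m r - b r), abs_le.2 (⟨by linarith [hm'.1, hb'.2],
          by linarith [hm'.2, hb'.1]⟩ : -1 ≤ m r - b r ∧ m r - b r ≤ 1)]
    exact this.congr (Filter.Eventually.of_forall fun r => mul_comm _ _)
  calc ∫ r in Set.Ioi (0:ℝ), (m r - b r)^2 * φ r ^ 2
      ≤ ∫ r in Set.Ioi (0:ℝ), |h r - g r| * C :=
        setIntegral_mono_on hint2 hint1 measurableSet_Ioi key
    _ ≤ ∫ r, |h r - g r| * C := by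
        refine setIntegral_le_integral ((hhint.sub hgi).abs.mul_const C) ?_
        exact Filter.Eventually.of_forall fun r => mul_nonneg (abs_nonneg _) hC0
    _ = (∫ r, ‖h r - g r‖) * C := by rw [integral_mul_const]; rfl
    _ ≤ (ε / (C + 1)) * C := mul_le_mul_of_nonneg_right hgint hC0
    _ ≤ ε := by
        rw [div_mul_eq_mul_div, div_le_iff₀ (by linarith)]
        nlinarith
lemma convex_part (m₁ m₂ : ℝ → ℝ) (hm₁ : Measurable m₁) (hm₂ : Measurable m₂)
    (h₁ : ∀ r ∈ Set.Ioi (0:ℝ), m₁ r ∈ Set.Icc (0:ℝ) 1)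
    (h₂ : ∀ r ∈ Set.Ioi (0:ℝ), m₂ r ∈ Set.Icc (0:ℝ) 1)
    (t : ℝ) (ht0 : 0 ≤ t) (ht1 : t ≤ 1) :
    energy (fun r => t * m₁ r + (1 - t) * m₂ r)
      ≤ ENNReal.ofReal t * energy m₁ + ENNReal.ofReal (1 - t) * energy m₂ := by
  rw [energy]
  refine iSup_le ?_
  rintro ⟨G, hG⟩
  obtain ⟨hdc, hds⟩ := derivG_props hG
  have hG2c : Continuous (fun r => (G r) ^ 2) := hG.1.continuous.pow 2
  have hG2s : HasCompactSupport (fun r => (G r) ^ 2) :=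
    hG.2.1.comp_left (g := fun x : ℝ => x ^ 2) (by norm_num)
  set mix : ℝ → ℝ := fun r => t * m₁ r + (1 - t) * m₂ r with hmix
  have hmixm : Measurable mix := (hm₁.const_mul t).add (hm₂.const_mul (1 - t))
  have hmix01 : ∀ r ∈ Set.Ioi (0:ℝ), mix r ∈ Set.Icc (0:ℝ) 1 := by
    intro r hr
    have a := h₁ r hr; have b := h₂ r hr
    constructor <;> (simp only [hmix]; nlinarith [a.1, a.2, b.1, b.2])
  -- integrabilities
  have i1 : IntegrableOn (fun r => deriv G r * m₁ r) (Set.Ioi 0) :=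
    intOn hdc hds hm₁ (fun r hr => abs_le.2 ⟨by linarith [(h₁ r hr).1], (h₁ r hr).2⟩)
  have i2 : IntegrableOn (fun r => deriv G r * m₂ r) (Set.Ioi 0) :=
    intOn hdc hds hm₂ (fun r hr => abs_le.2 ⟨by linarith [(h₂ r hr).1], (h₂ r hr).2⟩)
  have j1 : IntegrableOn (fun r => (m₁ r * (1 - m₁ r)) * (G r) ^ 2) (Set.Ioi 0) :=
    intOn' hG2c hG2s (hm₁.mul (measurable_const.sub hm₁)) (fun r hr => sigma_bound (h₁ r hr))
  have j2 : IntegrableOn (fun r => (m₂ r * (1 - m₂ r)) * (G r) ^ 2) (Set.Ioi 0) :=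
    intOn' hG2c hG2s (hm₂.mul (measurable_const.sub hm₂)) (fun r hr => sigma_bound (h₂ r hr))
  have jmix : IntegrableOn (fun r => (mix r * (1 - mix r)) * (G r) ^ 2) (Set.Ioi 0) :=
    intOn' hG2c hG2s (hmixm.mul (measurable_const.sub hmixm))
      (fun r hr => sigma_bound (hmix01 r hr))
  -- first integral splits
  have e1 : ∫ r in Set.Ioi (0:ℝ), deriv G r * mix r
      = t * (∫ r in Set.Ioi (0:ℝ), deriv G r * m₁ r)
        + (1 - t) * (∫ r in Set.Ioi (0:ℝ), deriv G r * m₂ r) := by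
    rw [← integral_const_mul, ← integral_const_mul, ← integral_add (i1.const_mul t)
      (i2.const_mul (1 - t))]
    exact setIntegral_congr_fun measurableSet_Ioi (fun r _ => by simp [hmix]; ring)
  -- second integral : concavity
  have e2 : t * (∫ r in Set.Ioi (0:ℝ), (m₁ r * (1 - m₁ r)) * (G r) ^ 2)
      + (1 - t) * (∫ r in Set.Ioi (0:ℝ), (m₂ r * (1 - m₂ r)) * (G r) ^ 2)
      ≤ ∫ r in Set.Ioi (0:ℝ), (mix r * (1 - mix r)) * (G r) ^ 2 := by
    rw [← integral_const_mul, ← integral_const_mul, ← integral_add (j1.const_mul t)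
      (j2.const_mul (1 - t))]
    refine setIntegral_mono_on ((j1.const_mul t).add (j2.const_mul (1 - t))) jmix
      measurableSet_Ioi ?_
    intro r _
    have key : 0 ≤ t * (1 - t) * ((m₁ r - m₂ r) * G r) ^ 2 :=
      mul_nonneg (mul_nonneg ht0 (by linarith)) (sq_nonneg _)
    simp only [hmix]
    nlinarith [key]
  have key : energyExpr mix G ≤ t * energyExpr m₁ G + (1 - t) * energyExpr m₂ G := by
    simp only [energyExpr]
    rw [e1]
    have expand : t * ((- ∫ r in Set.Ioi (0:ℝ), deriv G r * m₁ r)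
          - ∫ r in Set.Ioi (0:ℝ), (m₁ r * (1 - m₁ r)) * (G r) ^ 2)
        + (1 - t) * ((- ∫ r in Set.Ioi (0:ℝ), deriv G r * m₂ r)
          - ∫ r in Set.Ioi (0:ℝ), (m₂ r * (1 - m₂ r)) * (G r) ^ 2)
      = - (t * (∫ r in Set.Ioi (0:ℝ), deriv G r * m₁ r)
            + (1 - t) * (∫ r in Set.Ioi (0:ℝ), deriv G r * m₂ r))
        - (t * (∫ r in Set.Ioi (0:ℝ), (m₁ r * (1 - m₁ r)) * (G r) ^ 2)
            + (1 - t) * (∫ r in Set.Ioi (0:ℝ), (m₂ r * (1 - m₂ r)) * (G r) ^ 2)) := by ring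
    rw [expand]
    linarith [e2]
  calc ENNReal.ofReal (energyExpr mix G)
      ≤ ENNReal.ofReal (t * energyExpr m₁ G + (1 - t) * energyExpr m₂ G) :=
        ENNReal.ofReal_le_ofReal key
    _ ≤ ENNReal.ofReal (t * energyExpr m₁ G) + ENNReal.ofReal ((1 - t) * energyExpr m₂ G) :=
        ENNReal.ofReal_add_le
    _ = ENNReal.ofReal t * ENNReal.ofReal (energyExpr m₁ G)
        + ENNReal.ofReal (1 - t) * ENNReal.ofReal (energyExpr m₂ G) := by
        rw [ENNReal.ofReal_mul ht0, ENNReal.ofReal_mul (by linarith)]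
    _ ≤ ENNReal.ofReal t * energy m₁ + ENNReal.ofReal (1 - t) * energy m₂ := by
        gcongr
        · exact le_iSup (fun H : {H : ℝ → ℝ // IsC1K H} =>
            ENNReal.ofReal (energyExpr m₁ H.1)) ⟨G, hG⟩
        · exact le_iSup (fun H : {H : ℝ → ℝ // IsC1K H} =>
            ENNReal.ofReal (energyExpr m₂ H.1)) ⟨G, hG⟩
lemma lsc_part (m : ℝ → ℝ) (ms : ℕ → ℝ → ℝ) (hm : Measurable m)
    (hm01 : ∀ r ∈ Set.Ioi (0:ℝ), m r ∈ Set.Icc (0:ℝ) 1)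
    (hms : ∀ n, Measurable (ms n))
    (hms01 : ∀ n, ∀ r ∈ Set.Ioi (0:ℝ), ms n r ∈ Set.Icc (0:ℝ) 1)
    (hconv : ∀ G : ℝ → ℝ, Continuous G → HasCompactSupport G → tsupport G ⊆ Set.Ioi 0 →
      Tendsto (fun n => ∫ r in Set.Ioi (0:ℝ), G r * ms n r) atTop
        (nhds (∫ r in Set.Ioi (0:ℝ), G r * m r))) :
    energy m ≤ Filter.liminf (fun n => energy (ms n)) atTop := by
  rw [energy]
  refine iSup_le ?_
  rintro ⟨G, hG⟩
  refine ENNReal.le_of_forall_pos_le_add fun ε hε _ => ?_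
  have hεR : (0:ℝ) < (ε:ℝ) := hε
  obtain ⟨b, hbc, hb01, hbap⟩ := approx_lemma m hm hm01 G hG.1.continuous hG.2.1 hεR
  have hdc : Continuous (deriv G) := hG.1.continuous_deriv le_rfl
  have hds : HasCompactSupport (deriv G) := hG.2.1.deriv
  have hdsupp : tsupport (deriv G) ⊆ Set.Ioi 0 := (closure_minimal (support_deriv_subset (f := G)) (isClosed_tsupport G)).trans hG.2.2
  have hG2c : Continuous (fun r => (G r) ^ 2) := hG.1.continuous.pow 2
  have hG2s : HasCompactSupport (fun r => (G r) ^ 2) :=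
    hG.2.1.comp_left (g := fun x : ℝ => x ^ 2) (by norm_num)
  set φ₂ : ℝ → ℝ := fun r => (1 - 2 * b r) * (G r) ^ 2 with hφ₂
  have hφ₂c : Continuous φ₂ := (continuous_const.sub (continuous_const.mul hbc)).mul hG2c
  have hφ₂s : HasCompactSupport φ₂ := hG2s.mul_left
  have hφ₂supp : tsupport φ₂ ⊆ Set.Ioi 0 := by
    refine subset_trans ?_ hG.2.2
    refine closure_minimal ?_ (isClosed_tsupport G)
    intro r hr
    simp only [hφ₂, Function.mem_support] at hr
    have : G r ≠ 0 := by
      intro h0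
      exact hr (by simp [h0])
    exact subset_closure (by simpa [Function.mem_support] using this)
  -- the affine functional
  set A : (ℝ → ℝ) → ℝ := fun f =>
    (- ∫ r in Set.Ioi (0:ℝ), deriv G r * f r) - (∫ r in Set.Ioi (0:ℝ), φ₂ r * f r)
      - ∫ r in Set.Ioi (0:ℝ), (b r ^ 2) * (G r) ^ 2 with hA
  have hbsq : ∀ r ∈ Set.Ioi (0:ℝ), |b r ^ 2| ≤ 1 := by
    intro r _
    rw [abs_of_nonneg (sq_nonneg _)]
    nlinarith [(hb01 r).1, (hb01 r).2]
  have hcint : IntegrableOn (fun r => (b r ^ 2) * (G r) ^ 2) (Set.Ioi 0) :=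
    intOn' hG2c hG2s ((hbc.measurable).pow_const 2) hbsq
  -- (i) A f ≤ energyExpr f G for admissible f
  have hAle : ∀ f : ℝ → ℝ, Measurable f → (∀ r ∈ Set.Ioi (0:ℝ), f r ∈ Set.Icc (0:ℝ) 1) →
      A f ≤ energyExpr f G := by
    intro f hf hf01
    have hb1 : ∀ r ∈ Set.Ioi (0:ℝ), |f r| ≤ 1 := fun r hr =>
      abs_le.2 ⟨by linarith [(hf01 r hr).1], (hf01 r hr).2⟩
    have hSint : IntegrableOn (fun r => (f r * (1 - f r)) * (G r) ^ 2) (Set.Ioi 0) :=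
      intOn' hG2c hG2s (hf.mul (measurable_const.sub hf)) (fun r hr => sigma_bound (hf01 r hr))
    have hI₂int : IntegrableOn (fun r => φ₂ r * f r) (Set.Ioi 0) := intOn hφ₂c hφ₂s hf hb1
    have hmono : ∫ r in Set.Ioi (0:ℝ), (f r * (1 - f r)) * (G r) ^ 2
        ≤ (∫ r in Set.Ioi (0:ℝ), φ₂ r * f r)
          + ∫ r in Set.Ioi (0:ℝ), (b r ^ 2) * (G r) ^ 2 := by
      rw [← integral_add hI₂int hcint]
      refine setIntegral_mono_on hSint (hI₂int.add hcint) measurableSet_Ioi ?_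
      intro r _
      simp only [hφ₂]
      nlinarith [sq_nonneg ((f r - b r) * G r)]
    simp only [hA, energyExpr]
    linarith [hmono]
  -- (ii) energyExpr m G ≤ A m + ε
  have hDint : IntegrableOn (fun r => (m r - b r) ^ 2 * (G r) ^ 2) (Set.Ioi 0) := by
    refine intOn' hG2c hG2s (((hm.sub hbc.measurable)).pow_const 2) (C := 1) ?_
    intro r hr
    rw [abs_of_nonneg (sq_nonneg _)]
    nlinarith [(hm01 r hr).1, (hm01 r hr).2, (hb01 r).1, (hb01 r).2]
  have hSint : IntegrableOn (fun r => (m r * (1 - m r)) * (G r) ^ 2) (Set.Ioi 0) :=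
    intOn' hG2c hG2s (hm.mul (measurable_const.sub hm)) (fun r hr => sigma_bound (hm01 r hr))
  have hb1m : ∀ r ∈ Set.Ioi (0:ℝ), |m r| ≤ 1 := fun r hr =>
    abs_le.2 ⟨by linarith [(hm01 r hr).1], (hm01 r hr).2⟩
  have hI₂mint : IntegrableOn (fun r => φ₂ r * m r) (Set.Ioi 0) := intOn hφ₂c hφ₂s hm hb1m
  have hsplit : (∫ r in Set.Ioi (0:ℝ), (m r * (1 - m r)) * (G r) ^ 2)
      + (∫ r in Set.Ioi (0:ℝ), (m r - b r) ^ 2 * (G r) ^ 2)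
      = (∫ r in Set.Ioi (0:ℝ), φ₂ r * m r)
        + ∫ r in Set.Ioi (0:ℝ), (b r ^ 2) * (G r) ^ 2 := by
    rw [← integral_add hSint hDint, ← integral_add hI₂mint hcint]
    refine integral_congr_ae (Filter.Eventually.of_forall fun r => ?_)
    simp only [hφ₂]
    ring
  have hkey : energyExpr m G ≤ A m + ε := by
    simp only [hA, energyExpr]
    linarith [hsplit, hbap]
  -- (iii) convergence of A (ms n)
  have h1 := hconv (deriv G) hdc hds hdsupp
  have h2 := hconv φ₂ hφ₂c hφ₂s hφ₂supp
  have hAtend : Tendsto (fun n => A (ms n)) atTop (nhds (A m)) := by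
    simp only [hA]
    exact (h1.neg.sub h2).sub tendsto_const_nhds
  have hlim : Filter.liminf (fun n => ENNReal.ofReal (A (ms n))) atTop
      = ENNReal.ofReal (A m) :=
    ((ENNReal.continuous_ofReal.tendsto _).comp hAtend).liminf_eq
  have hle : ∀ n, ENNReal.ofReal (A (ms n)) ≤ energy (ms n) := by
    intro n
    refine le_trans (ENNReal.ofReal_le_ofReal (hAle (ms n) (hms n) (hms01 n))) ?_
    exact le_iSup (fun H : {H : ℝ → ℝ // IsC1K H} =>
      ENNReal.ofReal (energyExpr (ms n) H.1)) ⟨G, hG⟩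
  calc ENNReal.ofReal (energyExpr m G)
      ≤ ENNReal.ofReal (A m + ε) := ENNReal.ofReal_le_ofReal hkey
    _ ≤ ENNReal.ofReal (A m) + ENNReal.ofReal (ε:ℝ) := ENNReal.ofReal_add_le
    _ = ENNReal.ofReal (A m) + (ε : ℝ≥0∞) := by rw [ENNReal.ofReal_coe_nnreal]
    _ ≤ Filter.liminf (fun n => energy (ms n)) atTop + (ε : ℝ≥0∞) := by
        gcongr
        rw [← hlim]
        exact liminf_le_liminf (Filter.Eventually.of_forall hle)


/-- The energy functional is convex and sequentially lower semicontinuous with respect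
to vague convergence of the associated measures. -/
theorem stmt1 :
    (∀ m₁ m₂ : ℝ → ℝ, Measurable m₁ → Measurable m₂ →
      (∀ r ∈ Set.Ioi (0:ℝ), m₁ r ∈ Set.Icc (0:ℝ) 1) →
      (∀ r ∈ Set.Ioi (0:ℝ), m₂ r ∈ Set.Icc (0:ℝ) 1) →
      ∀ t : ℝ, 0 ≤ t → t ≤ 1 →
        energy (fun r => t * m₁ r + (1 - t) * m₂ r)
          ≤ ENNReal.ofReal t * energy m₁ + ENNReal.ofReal (1 - t) * energy m₂) ∧
    (∀ (m : ℝ → ℝ) (ms : ℕ → ℝ → ℝ), Measurable m →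
      (∀ r ∈ Set.Ioi (0:ℝ), m r ∈ Set.Icc (0:ℝ) 1) →
      (∀ n, Measurable (ms n)) →
      (∀ n, ∀ r ∈ Set.Ioi (0:ℝ), ms n r ∈ Set.Icc (0:ℝ) 1) →
      (∀ G : ℝ → ℝ, Continuous G → HasCompactSupport G → tsupport G ⊆ Set.Ioi 0 →
        Tendsto (fun n => ∫ r in Set.Ioi (0:ℝ), G r * ms n r) atTop
          (nhds (∫ r in Set.Ioi (0:ℝ), G r * m r))) →
      energy m ≤ Filter.liminf (fun n => energy (ms n)) atTop) :=
  ⟨convex_part, lsc_part⟩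
end
end

section
/- Fix 0<α<1. Let m:(0,∞)→[0,1] be measurable with Q_α(m(r)dr) < ∞. Then m has a generalized derivative: there exists a locally integrable g:(0,∞)→ℝ with ∫₀^∞ G'(r) m(r) dr = −∫₀^∞ G(r) g(r) dr for every G ∈ C¹_K((0,∞)), and Q_α(m(r)dr) = (1/8) ∫₀^∞ g(r)² / (m_α(r)(1−m_α(r))) dr, with the convention that the integrand vanishes where g = 0. -/
open MeasureTheory Set Filter
open scoped ENNReal Topology

noncomputable section

/-- The density `m_α`: equal to `m` on `(0,1/2)` and to `α` on `[1/2,∞)`. -/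
def mAlpha (α : ℝ) (m : ℝ → ℝ) : ℝ → ℝ := fun r => if r < 1/2 then m r else α

/-- The expression inside the supremum defining the energy `Q_α`:
`-∫₀^∞ G'(r) m(r) dr - 2∫₀^∞ σ(m_α(r)) G(r)² dr` with `σ(a) = a(1-a)`. -/
def energyAlphaExpr (α : ℝ) (m G : ℝ → ℝ) : ℝ :=
  (- ∫ r in Set.Ioi (0:ℝ), deriv G r * m r)
    - 2 * ∫ r in Set.Ioi (0:ℝ), (mAlpha α m r * (1 - mAlpha α m r)) * (G r) ^ 2

/-- The energy functional `Q_α(m(r)dr)`, with values in `ℝ≥0∞`. -/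
def energyAlpha (α : ℝ) (m : ℝ → ℝ) : ℝ≥0∞ :=
  ⨆ G : {G : ℝ → ℝ // IsC1K G}, ENNReal.ofReal (energyAlphaExpr α m G.1)

/-! ### Auxiliary definitions and lemmas -/

/-- `σ(m_α(r)) = m_α(r)(1-m_α(r))`. -/
def sigA (α : ℝ) (m : ℝ → ℝ) : ℝ → ℝ := fun r => mAlpha α m r * (1 - mAlpha α m r)

/-- The measure `σ(m_α(r)) dr` on `(0,∞)`. -/
def muA (α : ℝ) (m : ℝ → ℝ) : Measure ℝ :=
  (volume.restrict (Set.Ioi (0:ℝ))).withDensity fun r => ((sigA α m r).toNNReal : ℝ≥0∞)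

section Aux

variable {α : ℝ} {m : ℝ → ℝ}

lemma measurable_mAlpha (hm : Measurable m) : Measurable (mAlpha α m) :=
  Measurable.ite measurableSet_Iio hm measurable_const

lemma measurable_sigA (hm : Measurable m) : Measurable (sigA α m) :=
  (measurable_mAlpha hm).mul (measurable_const.sub (measurable_mAlpha hm))

lemma sigA_bounds (hα0 : 0 < α) (hα1 : α < 1)
    (hm01 : ∀ r ∈ Set.Ioi (0:ℝ), m r ∈ Set.Icc (0:ℝ) 1) :
    ∀ r ∈ Set.Ioi (0:ℝ), 0 ≤ sigA α m r ∧ sigA α m r ≤ 1/4 := by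
  intro r hr
  have hmem : mAlpha α m r ∈ Set.Icc (0:ℝ) 1 := by
    unfold mAlpha
    split_ifs with h
    · exact hm01 r hr
    · exact ⟨hα0.le, hα1.le⟩
  obtain ⟨h0, h1⟩ := hmem
  unfold sigA
  constructor
  · nlinarith
  · nlinarith [sq_nonneg (mAlpha α m r - 1/2)]

lemma sigA_ae (hα0 : 0 < α) (hα1 : α < 1)
    (hm01 : ∀ r ∈ Set.Ioi (0:ℝ), m r ∈ Set.Icc (0:ℝ) 1) :
    ∀ᵐ r ∂(volume.restrict (Set.Ioi (0:ℝ))), 0 ≤ sigA α m r ∧ sigA α m r ≤ 1/4 :=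
  (ae_restrict_iff' measurableSet_Ioi).2
    (Filter.Eventually.of_forall (sigA_bounds hα0 hα1 hm01))

lemma memLp_muA (hα0 : 0 < α) (hα1 : α < 1)
    (hm01 : ∀ r ∈ Set.Ioi (0:ℝ), m r ∈ Set.Icc (0:ℝ) 1)
    {G : ℝ → ℝ} (hG : Continuous G) (hGc : HasCompactSupport G) :
    MemLp G 2 (muA α m) := by
  have h1 : MemLp G 2 (volume.restrict (Set.Ioi (0:ℝ))) :=
    hG.memLp_of_hasCompactSupport hGc
  have hle : muA α m ≤ volume.restrict (Set.Ioi (0:ℝ)) := by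
    have hb : (fun r => (((sigA α m r).toNNReal : ℝ≥0∞)))
        ≤ᵐ[volume.restrict (Set.Ioi (0:ℝ))] (fun _ => (1:ℝ≥0∞)) := by
      filter_upwards [sigA_ae hα0 hα1 hm01] with r hr
      show ENNReal.ofReal (sigA α m r) ≤ 1
      rw [ENNReal.ofReal_le_one]
      linarith [hr.2]
    calc muA α m ≤ (volume.restrict (Set.Ioi (0:ℝ))).withDensity (fun _ => 1) :=
          withDensity_mono hb
      _ = volume.restrict (Set.Ioi (0:ℝ)) := by rw [withDensity_const, one_smul]
  exact h1.mono_measure hle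

lemma integral_muA (hm : Measurable m) (hα0 : 0 < α) (hα1 : α < 1)
    (hm01 : ∀ r ∈ Set.Ioi (0:ℝ), m r ∈ Set.Icc (0:ℝ) 1) (h : ℝ → ℝ) :
    ∫ r, h r ∂(muA α m) = ∫ r in Set.Ioi (0:ℝ), sigA α m r * h r := by
  rw [muA, integral_withDensity_eq_integral_smul ((measurable_sigA hm).real_toNNReal)]
  refine integral_congr_ae ?_
  filter_upwards [sigA_ae hα0 hα1 hm01] with r hr
  rw [NNReal.smul_def, Real.coe_toNNReal _ hr.1, smul_eq_mul]

lemma isC1K_zero : IsC1K (fun _ => (0:ℝ)) := by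
  refine ⟨contDiff_const, ?_, ?_⟩
  · have : tsupport (fun _ : ℝ => (0:ℝ)) = ∅ := by
      simp [tsupport, Function.support]
    rw [HasCompactSupport, this]; exact isCompact_empty
  · have : tsupport (fun _ : ℝ => (0:ℝ)) = ∅ := by
      simp [tsupport, Function.support]
    rw [this]; exact Set.empty_subset _

lemma isC1K_comb {G1 G2 : ℝ → ℝ} (h1 : IsC1K G1) (h2 : IsC1K G2) (a b : ℝ) :
    IsC1K (fun r => a * G1 r + b * G2 r) := by
  obtain ⟨h1d, h1c, h1s⟩ := h1
  obtain ⟨h2d, h2c, h2s⟩ := h2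
  have hsupp : Function.support (fun r => a * G1 r + b * G2 r)
      ⊆ tsupport G1 ∪ tsupport G2 := by
    intro x hx
    by_contra hxn
    rw [Set.mem_union] at hxn
    push_neg at hxn
    have e1 : G1 x = 0 := image_eq_zero_of_notMem_tsupport hxn.1
    have e2 : G2 x = 0 := image_eq_zero_of_notMem_tsupport hxn.2
    apply hx
    simp [e1, e2]
  have hclosed : IsClosed (tsupport G1 ∪ tsupport G2) :=
    (isClosed_tsupport _).union (isClosed_tsupport _)
  have hts : tsupport (fun r => a * G1 r + b * G2 r) ⊆ tsupport G1 ∪ tsupport G2 :=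
    closure_minimal hsupp hclosed
  refine ⟨(contDiff_const.mul h1d).add (contDiff_const.mul h2d), ?_,
    hts.trans (Set.union_subset h1s h2s)⟩
  exact IsCompact.of_isClosed_subset (h1c.union h2c) (isClosed_tsupport _) hts

lemma deriv_comb {G1 G2 : ℝ → ℝ} (h1 : ContDiff ℝ 1 G1) (h2 : ContDiff ℝ 1 G2)
    (a b r : ℝ) :
    deriv (fun s => a * G1 s + b * G2 s) r = a * deriv G1 r + b * deriv G2 r := by
  have d1 : DifferentiableAt ℝ G1 r := (h1.differentiable one_ne_zero).differentiableAt
  have d2 : DifferentiableAt ℝ G2 r := (h2.differentiable one_ne_zero).differentiableAt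
  rw [deriv_fun_add (d1.const_mul a) (d2.const_mul b), deriv_const_mul a d1,
    deriv_const_mul b d2]

lemma integrable_deriv_mul (hm : Measurable m)
    (hm01 : ∀ r ∈ Set.Ioi (0:ℝ), m r ∈ Set.Icc (0:ℝ) 1)
    {G : ℝ → ℝ} (hG : IsC1K G) :
    Integrable (fun r => deriv G r * m r) (volume.restrict (Set.Ioi (0:ℝ))) := by
  have hd : Continuous (deriv G) := hG.1.continuous_deriv le_rfl
  have hds : HasCompactSupport (deriv G) := hG.2.1.deriv
  have hint : Integrable (deriv G) (volume.restrict (Set.Ioi (0:ℝ))) :=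
    (hd.integrable_of_hasCompactSupport hds).restrict
  have hb : ∀ᵐ r ∂(volume.restrict (Set.Ioi (0:ℝ))), ‖m r‖ ≤ 1 := by
    refine (ae_restrict_iff' measurableSet_Ioi).2 (Filter.Eventually.of_forall ?_)
    intro r hr
    have := hm01 r hr
    rw [Real.norm_eq_abs, abs_le]
    exact ⟨by linarith [this.1], this.2⟩
  have := hint.bdd_mul (hm.aestronglyMeasurable) hb
  exact this.congr (Filter.Eventually.of_forall fun r => mul_comm _ _)

lemma integrable_sig_mul (hm : Measurable m) (hα0 : 0 < α) (hα1 : α < 1)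
    (hm01 : ∀ r ∈ Set.Ioi (0:ℝ), m r ∈ Set.Icc (0:ℝ) 1)
    {H : ℝ → ℝ} (hH : Continuous H) (hHc : HasCompactSupport H) :
    Integrable (fun r => sigA α m r * H r) (volume.restrict (Set.Ioi (0:ℝ))) := by
  have hint : Integrable H (volume.restrict (Set.Ioi (0:ℝ))) :=
    (hH.integrable_of_hasCompactSupport hHc).restrict
  have hb : ∀ᵐ r ∂(volume.restrict (Set.Ioi (0:ℝ))), ‖sigA α m r‖ ≤ 1/4 := by
    filter_upwards [sigA_ae hα0 hα1 hm01] with r hr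
    rw [Real.norm_eq_abs, abs_le]
    exact ⟨by linarith [hr.1], hr.2⟩
  exact hint.bdd_mul ((measurable_sigA hm).aestronglyMeasurable) hb

end Aux

set_option maxHeartbeats 2000000 in
/-- If a measurable density `m : (0,∞) → [0,1]` has finite energy `Q_α`, then it admits a
generalized derivative `g`, and `Q_α` equals `(1/8)∫₀^∞ g(r)²/σ(m_α(r)) dr`. -/
theorem stmt2 (α : ℝ) (hα0 : 0 < α) (hα1 : α < 1)
    (m : ℝ → ℝ) (hmeas : Measurable m)
    (hm01 : ∀ r ∈ Set.Ioi (0:ℝ), m r ∈ Set.Icc (0:ℝ) 1)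
    (hQ : energyAlpha α m ≠ ⊤) :
    ∃ g : ℝ → ℝ, LocallyIntegrableOn g (Set.Ioi 0) ∧
      (∀ G : ℝ → ℝ, IsC1K G →
        ∫ r in Set.Ioi (0:ℝ), deriv G r * m r
          = - ∫ r in Set.Ioi (0:ℝ), G r * g r) ∧
      IntegrableOn
        (fun r => (g r) ^ 2 / (mAlpha α m r * (1 - mAlpha α m r))) (Set.Ioi 0) ∧
      energyAlpha α m
        = ENNReal.ofReal
            ((1/8) * ∫ r in Set.Ioi (0:ℝ),
              (g r) ^ 2 / (mAlpha α m r * (1 - mAlpha α m r))) := by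
  classical
  set μ := muA α m with hμ
  set Qr := (energyAlpha α m).toReal with hQrdef
  have hQr0 : 0 ≤ Qr := ENNReal.toReal_nonneg
  -- the linear part of the energy
  set LL : (ℝ → ℝ) → ℝ := fun G => - ∫ r in Set.Ioi (0:ℝ), deriv G r * m r with hLL
  -- `MemLp` for C¹ₖ functions
  have memG : ∀ {G : ℝ → ℝ}, IsC1K G → MemLp G 2 μ := fun {G} hG =>
    memLp_muA hα0 hα1 hm01 (hG.1.continuous) hG.2.1
  -- expr ≤ Qr for all test functions
  have hle : ∀ G : ℝ → ℝ, IsC1K G → energyAlphaExpr α m G ≤ Qr := by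
    intro G hG
    have h1 : ENNReal.ofReal (energyAlphaExpr α m G) ≤ energyAlpha α m :=
      le_iSup (fun G : {G : ℝ → ℝ // IsC1K G} =>
        ENNReal.ofReal (energyAlphaExpr α m G.1)) ⟨G, hG⟩
    rcases le_or_gt (energyAlphaExpr α m G) 0 with h | h
    · linarith
    · have h2 := ENNReal.toReal_mono hQ h1
      rwa [ENNReal.toReal_ofReal h.le] at h2
  have hexpr_zero : energyAlphaExpr α m (fun _ => 0) = 0 := by
    unfold energyAlphaExpr
    simp
  -- approximating sequence
  have happrox : ∀ n : ℕ, ∃ G : ℝ → ℝ, IsC1K G ∧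
      Qr - 1/(n+1) < energyAlphaExpr α m G := by
    intro n
    have hpos : (0:ℝ) < 1/(n+1) := by positivity
    rcases lt_or_ge Qr (1/(n+1)) with h | h
    · exact ⟨fun _ => 0, isC1K_zero, by rw [hexpr_zero]; linarith⟩
    · have h0 : (0:ℝ) ≤ Qr - 1/(n+1) := by linarith
      have hlt : ENNReal.ofReal (Qr - 1/(n+1)) < energyAlpha α m := by
        conv_rhs => rw [← ENNReal.ofReal_toReal hQ]
        exact (ENNReal.ofReal_lt_ofReal_iff_of_nonneg h0).mpr (by linarith)
      rw [energyAlpha, lt_iSup_iff] at hlt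
      obtain ⟨⟨G, hG⟩, hGgt⟩ := hlt
      refine ⟨G, hG, ?_⟩
      have hex0 : (0:ℝ) ≤ energyAlphaExpr α m G := by
        by_contra hc
        push_neg at hc
        rw [ENNReal.ofReal_eq_zero.2 hc.le] at hGgt
        exact (not_lt.2 zero_le) hGgt
      exact (ENNReal.ofReal_lt_ofReal_iff_of_nonneg h0).mp hGgt
  choose Gs hGs hGs' using happrox
  -- Hilbert space setup
  have hinner : ∀ (G1 G2 : ℝ → ℝ) (h1 : MemLp G1 2 μ) (h2 : MemLp G2 2 μ),
      (inner ℝ (h1.toLp G1) (h2.toLp G2) : ℝ)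
        = ∫ r in Set.Ioi (0:ℝ), sigA α m r * (G1 r * G2 r) := by
    intro G1 G2 h1 h2
    rw [L2.inner_def]
    have hcongr : (∫ a, (inner ℝ ((h1.toLp G1) a) ((h2.toLp G2) a) : ℝ) ∂μ)
        = ∫ a, G1 a * G2 a ∂μ := by
      refine integral_congr_ae ?_
      filter_upwards [h1.coeFn_toLp, h2.coeFn_toLp] with r e1 e2
      rw [e1, e2]
      simp [RCLike.inner_apply, starRingEnd_apply, star_trivial]
      ring
    rw [hcongr, hμ, integral_muA hmeas hα0 hα1 hm01]
  -- norm squared of toLp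
  have hnorm : ∀ (G : ℝ → ℝ) (h : MemLp G 2 μ),
      ‖h.toLp G‖^2 = ∫ r in Set.Ioi (0:ℝ), sigA α m r * (G r * G r) := by
    intro G h
    rw [← real_inner_self_eq_norm_sq, hinner G G h h]
  -- expression via norms
  have hexpr : ∀ (G : ℝ → ℝ) (hG : IsC1K G),
      energyAlphaExpr α m G = LL G - 2 * ‖(memG hG).toLp G‖^2 := by
    intro G hG
    rw [hnorm G (memG hG)]
    unfold energyAlphaExpr
    rw [hLL]
    simp only [sigA]
    congr 2
    refine integral_congr_ae (Filter.Eventually.of_forall fun r => ?_)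
    ring
  -- the two key inequalities in Hilbert space terms
  have hΦlb : ∀ (G : ℝ → ℝ) (hG : IsC1K G),
      -Qr ≤ 2 * ‖(memG hG).toLp G‖^2 - LL G := by
    intro G hG
    have := hle G hG
    rw [hexpr G hG] at this
    linarith
  set x : ℕ → Lp ℝ 2 μ := fun n => (memG (hGs n)).toLp (Gs n) with hx
  have hΦub : ∀ n : ℕ, 2 * ‖x n‖^2 - LL (Gs n) ≤ -Qr + 1/(n+1) := by
    intro n
    have := hGs' n
    rw [hexpr (Gs n) (hGs n)] at this
    simp only [hx]
    linarith
  -- linearity of LL on combinations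
  have hLcomb : ∀ (G1 G2 : ℝ → ℝ), IsC1K G1 → IsC1K G2 → ∀ a b : ℝ,
      LL (fun r => a * G1 r + b * G2 r) = a * LL G1 + b * LL G2 := by
    intro G1 G2 h1 h2 a b
    have hi1 : Integrable (fun r => deriv G1 r * m r)
        (volume.restrict (Set.Ioi (0:ℝ))) := integrable_deriv_mul hmeas hm01 h1
    have hi2 : Integrable (fun r => deriv G2 r * m r)
        (volume.restrict (Set.Ioi (0:ℝ))) := integrable_deriv_mul hmeas hm01 h2
    have e : ∀ r : ℝ, deriv (fun s => a * G1 s + b * G2 s) r * m r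
        = a * (deriv G1 r * m r) + b * (deriv G2 r * m r) := by
      intro r
      rw [deriv_comb h1.1 h2.1]
      ring
    rw [hLL]
    simp only
    rw [show (∫ r in Set.Ioi (0:ℝ), deriv (fun s => a * G1 s + b * G2 s) r * m r)
        = ∫ r in Set.Ioi (0:ℝ),
            (a * (deriv G1 r * m r) + b * (deriv G2 r * m r)) from
      integral_congr_ae (Filter.Eventually.of_forall e)]
    rw [integral_add (hi1.const_mul a) (hi2.const_mul b),
      integral_const_mul, integral_const_mul]
    ring
  -- toLp of combinations
  have htoLp : ∀ (G1 G2 : ℝ → ℝ) (h1 : MemLp G1 2 μ) (h2 : MemLp G2 2 μ)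
      (a b : ℝ) (hc : MemLp (fun r => a * G1 r + b * G2 r) 2 μ),
      hc.toLp (fun r => a * G1 r + b * G2 r) = a • (h1.toLp G1) + b • (h2.toLp G2) := by
    intro G1 G2 h1 h2 a b hc
    apply Lp.ext
    filter_upwards [hc.coeFn_toLp, Lp.coeFn_add (a • h1.toLp G1) (b • h2.toLp G2),
      Lp.coeFn_smul a (h1.toLp G1), Lp.coeFn_smul b (h2.toLp G2),
      h1.coeFn_toLp, h2.coeFn_toLp] with r e0 e1 e2 e3 e4 e5
    rw [e0, e1]
    simp only [Pi.add_apply, e2, e3, Pi.smul_apply, smul_eq_mul]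
    rw [e4, e5]
  -- Cauchy sequence
  have hcauchy_est : ∀ n k : ℕ, ‖x n - x k‖^2 ≤ 1/(n+1) + 1/(k+1) := by
    intro n k
    set mid : ℝ → ℝ := fun r => (1/2 : ℝ) * Gs n r + (1/2 : ℝ) * Gs k r with hmid
    have hmidC : IsC1K mid := isC1K_comb (hGs n) (hGs k) _ _
    have hmidL : LL mid = (1/2) * LL (Gs n) + (1/2) * LL (Gs k) :=
      hLcomb _ _ (hGs n) (hGs k) _ _
    have hmidT : (memG hmidC).toLp mid = (1/2 : ℝ) • x n + (1/2 : ℝ) • x k :=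
      htoLp _ _ _ _ _ _ _
    have hmidlb := hΦlb mid hmidC
    rw [hmidT, hmidL] at hmidlb
    have hub_n := hΦub n
    have hub_k := hΦub k
    have hpar : ‖x n + x k‖^2 + ‖x n - x k‖^2 = 2 * (‖x n‖^2 + ‖x k‖^2) := by
      simpa only [← pow_two] using parallelogram_law_with_norm ℝ (x n) (x k)
    have hmn : ‖(1/2 : ℝ) • x n + (1/2 : ℝ) • x k‖^2 = (1/4) * ‖x n + x k‖^2 := by
      rw [← smul_add, norm_smul]
      simp [norm_div, abs_of_nonneg]
      ring
    rw [hmn] at hmidlb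
    linarith [hpar, hmidlb, hub_n, hub_k]
  have hcauchy : CauchySeq x := by
    rw [Metric.cauchySeq_iff']
    intro ε hε
    obtain ⟨N, hN⟩ := exists_nat_gt (2 / (ε^2))
    refine ⟨N, fun n hn => ?_⟩
    have h1 : ‖x n - x N‖^2 ≤ 1/(n+1) + 1/(N+1) := hcauchy_est n N
    have h2 : (1:ℝ)/(n+1) ≤ 1/(N+1) := by
      apply one_div_le_one_div_of_le
      · positivity
      · exact_mod_cast Nat.add_le_add_right hn 1
    have h3 : (2:ℝ)/(ε^2) < N := hN
    have hN1 : (0:ℝ) < N + 1 := by positivity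
    have h4 : (2:ℝ)/(N+1) < ε^2 := by
      rw [div_lt_iff₀ hN1]
      have hε2 : (0:ℝ) < ε^2 := by positivity
      rw [div_lt_iff₀ hε2] at h3
      have e : ε^2 * (↑N+1) = ↑N * ε^2 + ε^2 := by ring
      linarith [h3, hε2, e]
    have e2 : (2:ℝ)/(↑N+1) = 1/(↑N+1) + 1/(↑N+1) := by ring
    have h5 : ‖x n - x N‖^2 < ε^2 := by linarith [h1, h2, h4, e2]
    rw [dist_eq_norm]
    exact lt_of_pow_lt_pow_left₀ 2 hε.le h5
  -- limit of the minimizing sequence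
  obtain ⟨f, htends⟩ := cauchySeq_tendsto_of_complete hcauchy
  have hxn_norm : Tendsto (fun n => ‖x n‖^2) atTop (𝓝 (‖f‖^2)) :=
    (htends.norm).pow 2
  have hone : Tendsto (fun n : ℕ => 1/((n:ℝ)+1)) atTop (𝓝 0) :=
    tendsto_one_div_add_atTop_nhds_zero_nat
  have hΦlim : Tendsto (fun n => 2 * ‖x n‖^2 - LL (Gs n)) atTop (𝓝 (-Qr)) := by
    have hlow : ∀ n : ℕ, -Qr ≤ 2 * ‖x n‖^2 - LL (Gs n) := fun n => hΦlb (Gs n) (hGs n)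
    have h0 : Tendsto (fun n : ℕ => -Qr + 1/((n:ℝ)+1)) atTop (𝓝 (-Qr)) := by
      simpa using (tendsto_const_nhds (x := -Qr)).add hone
    exact tendsto_of_tendsto_of_tendsto_of_le_of_le tendsto_const_nhds h0 hlow hΦub
  have hLlim : Tendsto (fun n => LL (Gs n)) atTop (𝓝 (2*‖f‖^2 + Qr)) := by
    have he : (fun n => LL (Gs n)) = fun n => 2 * ‖x n‖^2 - (2 * ‖x n‖^2 - LL (Gs n)) := by
      funext n; ring
    rw [he]
    have h2 := (hxn_norm.const_mul 2).sub hΦlim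
    simpa using h2
  -- the variational identity
  have hvar : ∀ (G : ℝ → ℝ) (hG : IsC1K G),
      LL G = 4 * (inner ℝ f ((memG hG).toLp G) : ℝ) := by
    intro G hG
    set z := (memG hG).toLp G with hz
    have key : ∀ t : ℝ, 0 ≤ t * (4 * (inner ℝ f z : ℝ) - LL G) + 2 * t^2 * ‖z‖^2 := by
      intro t
      have hn : ∀ n : ℕ, -Qr ≤ 2 * ‖x n + t • z‖^2 - LL (Gs n) - t * LL G := by
        intro n
        have hC : IsC1K (fun r => 1 * Gs n r + t * G r) := isC1K_comb (hGs n) hG 1 t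
        have h1 := hΦlb _ hC
        have hT : (memG hC).toLp (fun r => 1 * Gs n r + t * G r)
            = (1:ℝ) • x n + t • z := htoLp _ _ _ _ _ _ _
        have hL : LL (fun r => 1 * Gs n r + t * G r) = 1 * LL (Gs n) + t * LL G :=
          hLcomb _ _ (hGs n) hG 1 t
        rw [hT, hL, one_smul] at h1
        linarith
      have hlim : Tendsto (fun n => 2 * ‖x n + t • z‖^2 - LL (Gs n) - t * LL G) atTop
          (𝓝 (2 * ‖f + t • z‖^2 - (2*‖f‖^2 + Qr) - t * LL G)) := by
        have h1 : Tendsto (fun n => x n + t • z) atTop (𝓝 (f + t • z)) :=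
          htends.add tendsto_const_nhds
        exact (((h1.norm.pow 2).const_mul 2).sub hLlim).sub tendsto_const_nhds
      have hge : -Qr ≤ 2 * ‖f + t • z‖^2 - (2*‖f‖^2 + Qr) - t * LL G :=
        ge_of_tendsto hlim (Filter.Eventually.of_forall hn)
      have hexp : ‖f + t • z‖^2 = ‖f‖^2 + 2 * (t * (inner ℝ f z : ℝ)) + t^2 * ‖z‖^2 := by
        rw [norm_add_sq_real, real_inner_smul_right, norm_smul, mul_pow]
        simp [Real.norm_eq_abs, sq_abs]
      rw [hexp] at hge
      nlinarith [hge]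
    have hc0 : 4 * (inner ℝ f z : ℝ) - LL G = 0 := by
      set c := 4 * (inner ℝ f z : ℝ) - LL G with hc
      by_contra hcne
      have hc2 : 0 < c^2 := by positivity
      set Z := ‖z‖^2 with hZ
      have hZ0 : 0 ≤ Z := sq_nonneg _
      set s := 1/(2*Z+1) with hs
      have hs0 : 0 < s := by positivity
      have hs1 : s * (2*Z+1) = 1 := by
        rw [hs]; field_simp
      have hk := key (-c * s)
      nlinarith [hk, hc2, hs0, hZ0, hs1, mul_pos (mul_pos hc2 hs0) hs0]
    linarith [hc0]
  -- identification of the limit: Qr = 2‖f‖²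
  have hinner_lim : Tendsto (fun n => (inner ℝ f (x n) : ℝ)) atTop (𝓝 (inner ℝ f f : ℝ)) :=
    tendsto_const_nhds.inner htends
  have hL4 : Tendsto (fun n => LL (Gs n)) atTop (𝓝 (4 * (inner ℝ f f : ℝ))) := by
    have he : (fun n => LL (Gs n)) = fun n => 4 * (inner ℝ f (x n) : ℝ) := by
      funext n; exact hvar (Gs n) (hGs n)
    rw [he]
    exact hinner_lim.const_mul 4
  have hQr2 : Qr = 2 * ‖f‖^2 := by
    have huniq := tendsto_nhds_unique hL4 hLlim
    have hnn : (inner ℝ f f : ℝ) = ‖f‖^2 := real_inner_self_eq_norm_sq f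
    rw [hnn] at huniq
    linarith
  -- the generalized derivative
  set F : ℝ → ℝ := ⇑f with hF
  have hFmem : MemLp F 2 μ := Lp.memLp f
  set g : ℝ → ℝ := fun r => 4 * F r * sigA α m r with hg
  have hinnerF : ∀ (G : ℝ → ℝ) (h2 : MemLp G 2 μ),
      (inner ℝ f (h2.toLp G) : ℝ) = ∫ r in Set.Ioi (0:ℝ), sigA α m r * (F r * G r) := by
    intro G h2
    rw [L2.inner_def]
    have he : (∫ a, (inner ℝ (f a) ((h2.toLp G) a) : ℝ) ∂μ) = ∫ a, F a * G a ∂μ := by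
      refine integral_congr_ae ?_
      filter_upwards [h2.coeFn_toLp] with r e2
      rw [e2]
      simp [RCLike.inner_apply, starRingEnd_apply, star_trivial]
      rw [hF]; ring
    rw [he, hμ, integral_muA hmeas hα0 hα1 hm01]
  have hinnerFF : (inner ℝ f f : ℝ) = ∫ r in Set.Ioi (0:ℝ), sigA α m r * (F r * F r) := by
    rw [L2.inner_def]
    have he : (∫ a, (inner ℝ (f a) (f a) : ℝ) ∂μ) = ∫ a, F a * F a ∂μ := by
      refine integral_congr_ae (Filter.Eventually.of_forall fun r => ?_)
      simp [RCLike.inner_apply, starRingEnd_apply, star_trivial]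
      rw [hF]; ring
    rw [he, hμ, integral_muA hmeas hα0 hα1 hm01]
  -- part B: integration by parts identity
  have partB : ∀ G : ℝ → ℝ, IsC1K G →
      ∫ r in Set.Ioi (0:ℝ), deriv G r * m r = - ∫ r in Set.Ioi (0:ℝ), G r * g r := by
    intro G hG
    have h1 := hvar G hG
    rw [hinnerF G (memG hG)] at h1
    have h2 : ∫ r in Set.Ioi (0:ℝ), G r * g r
        = 4 * ∫ r in Set.Ioi (0:ℝ), sigA α m r * (F r * G r) := by
      rw [← integral_const_mul]
      refine integral_congr_ae (Filter.Eventually.of_forall fun r => ?_)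
      simp only [hg]
      ring
    have h3 : LL G = - ∫ r in Set.Ioi (0:ℝ), deriv G r * m r := rfl
    rw [h3] at h1
    rw [h2, ← h1]
    ring
  -- integrability of F²σ
  have hInt16 : Integrable (fun r => F r^2 * sigA α m r)
      (volume.restrict (Set.Ioi (0:ℝ))) := by
    have h1 : Integrable (fun r => F r^2) μ := hFmem.integrable_sq
    rw [hμ, muA, integrable_withDensity_iff
      ((measurable_sigA hmeas).real_toNNReal.coe_nnreal_ennreal)
      (Filter.Eventually.of_forall fun r => ENNReal.coe_lt_top)] at h1
    refine h1.congr ?_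
    filter_upwards [sigA_ae hα0 hα1 hm01] with r hr
    rw [ENNReal.coe_toReal, Real.coe_toNNReal _ hr.1]
  -- pointwise identity for the quotient
  have hptwise : ∀ r : ℝ, g r ^ 2 / (mAlpha α m r * (1 - mAlpha α m r))
      = 16 * (F r^2 * sigA α m r) := by
    intro r
    have hsig : mAlpha α m r * (1 - mAlpha α m r) = sigA α m r := rfl
    rw [hsig]
    by_cases h : sigA α m r = 0
    · simp [hg, h]
    · have he : g r = 4 * F r * sigA α m r := by rw [hg]
      rw [he]
      field_simp
      ring
  -- part C: integrability of the quotient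
  have partC : IntegrableOn
      (fun r => g r ^ 2 / (mAlpha α m r * (1 - mAlpha α m r))) (Set.Ioi 0) := by
    have he : (fun r => g r ^ 2 / (mAlpha α m r * (1 - mAlpha α m r)))
        = fun r => 16 * (F r^2 * sigA α m r) := funext hptwise
    rw [IntegrableOn, he]
    exact hInt16.const_mul 16
  -- part A: local integrability of g
  have hmuA_le : muA α m ≤ volume.restrict (Set.Ioi (0:ℝ)) := by
    have hb : (fun r => (((sigA α m r).toNNReal : ℝ≥0∞)))
        ≤ᵐ[volume.restrict (Set.Ioi (0:ℝ))] (fun _ => (1:ℝ≥0∞)) := by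
      filter_upwards [sigA_ae hα0 hα1 hm01] with r hr
      show ENNReal.ofReal (sigA α m r) ≤ 1
      rw [ENNReal.ofReal_le_one]
      linarith [hr.2]
    calc muA α m ≤ (volume.restrict (Set.Ioi (0:ℝ))).withDensity (fun _ => 1) :=
          withDensity_mono hb
      _ = volume.restrict (Set.Ioi (0:ℝ)) := by rw [withDensity_const, one_smul]
  have partA : LocallyIntegrableOn g (Set.Ioi 0) := by
    rw [locallyIntegrableOn_iff (IsOpen.isLocallyClosed isOpen_Ioi)]
    intro k hk hkc
    have hkm : MeasurableSet k := hkc.isClosed.measurableSet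
    have hfin : IsFiniteMeasure (μ.restrict k) := by
      constructor
      rw [Measure.restrict_apply MeasurableSet.univ, Set.univ_inter]
      calc μ k ≤ (volume.restrict (Set.Ioi (0:ℝ))) k := by
            rw [hμ]; exact hmuA_le k
        _ = volume (k ∩ Set.Ioi 0) := Measure.restrict_apply hkm
        _ ≤ volume k := measure_mono Set.inter_subset_left
        _ < ⊤ := hkc.measure_lt_top
    haveI := hfin
    have hFk : MemLp F 2 (μ.restrict k) := hFmem.restrict k
    have hFk1 : MemLp F 1 (μ.restrict k) := hFk.mono_exponent (by norm_num)
    have hFint : Integrable F (μ.restrict k) := memLp_one_iff_integrable.1 hFk1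
    rw [hμ, muA, restrict_withDensity hkm, integrable_withDensity_iff
      ((measurable_sigA hmeas).real_toNNReal.coe_nnreal_ennreal)
      (Filter.Eventually.of_forall fun r => ENNReal.coe_lt_top)] at hFint
    have hres : (volume.restrict (Set.Ioi (0:ℝ))).restrict k = volume.restrict k := by
      rw [Measure.restrict_restrict hkm, Set.inter_eq_self_of_subset_left hk]
    rw [hres] at hFint
    have hFσ : IntegrableOn (fun r => F r * sigA α m r) k := by
      refine hFint.congr ?_
      refine (ae_restrict_iff' hkm).2 (Filter.Eventually.of_forall fun r hr => ?_)
      show F r * (((sigA α m r).toNNReal : ℝ≥0∞)).toReal = F r * sigA α m r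
      rw [ENNReal.coe_toReal, Real.coe_toNNReal _ (sigA_bounds hα0 hα1 hm01 r (hk hr)).1]
    have h4 := hFσ.const_mul 4
    refine h4.congr (Filter.Eventually.of_forall fun r => ?_)
    simp only [hg]
    ring
  -- part D: the energy identity
  have hFF : ∫ r in Set.Ioi (0:ℝ), sigA α m r * (F r * F r) = ‖f‖^2 := by
    rw [← hinnerFF]
    exact real_inner_self_eq_norm_sq f
  have hIeq : ∫ r in Set.Ioi (0:ℝ), g r ^ 2 / (mAlpha α m r * (1 - mAlpha α m r))
      = 16 * ∫ r in Set.Ioi (0:ℝ), sigA α m r * (F r * F r) := by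
    rw [← integral_const_mul]
    refine integral_congr_ae (Filter.Eventually.of_forall fun r => ?_)
    show g r ^ 2 / (mAlpha α m r * (1 - mAlpha α m r)) = 16 * (sigA α m r * (F r * F r))
    rw [hptwise r]
    ring
  have partD : energyAlpha α m = ENNReal.ofReal
      ((1/8) * ∫ r in Set.Ioi (0:ℝ),
        g r ^ 2 / (mAlpha α m r * (1 - mAlpha α m r))) := by
    have hval : (1/8 : ℝ) * ∫ r in Set.Ioi (0:ℝ),
        g r ^ 2 / (mAlpha α m r * (1 - mAlpha α m r)) = Qr := by
      rw [hIeq, hFF]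
      linarith [hQr2]
    rw [hval, hQrdef, ENNReal.ofReal_toReal hQ]
  exact ⟨g, partA, partB, partC, partD⟩
end
end

section
/- Fix α, β ∈ (0,1). The infimum, over all continuously differentiable functions m:[0,1/2]→(0,1) with m(0) = β and m(1/2) = α, of (π/4) ∫₀^{1/2} m'(r)² / (m(r)(1−m(r))) dr equals (π/2) ( arcsin(2β−1) − arcsin(2α−1) )². -/
open MeasureTheory Set Filter

noncomputable section


lemma aux_lower (α β : ℝ) (hα : α ∈ Set.Ioo (0:ℝ) 1) (hβ : β ∈ Set.Ioo (0:ℝ) 1)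
    (m : ℝ → ℝ)
    (hC : ContDiffOn ℝ 1 m (Set.Icc 0 (1/2)))
    (hm : ∀ r ∈ Set.Icc (0:ℝ) (1/2), m r ∈ Set.Ioo (0:ℝ) 1)
    (h0 : m 0 = β) (h1 : m (1/2) = α) :
    (Real.pi/2) * (Real.arcsin (2*β - 1) - Real.arcsin (2*α - 1)) ^ 2 ≤
      (Real.pi/4) * ∫ r in (0:ℝ)..(1/2),
        (derivWithin m (Set.Icc 0 (1/2)) r) ^ 2 / (m r * (1 - m r)) := by
  have h2 : (0:ℝ) < 1/2 := by norm_num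
  have hU : UniqueDiffOn ℝ (Set.Icc (0:ℝ) (1/2)) := uniqueDiffOn_Icc h2
  set D := derivWithin m (Set.Icc (0:ℝ) (1/2)) with hD
  have hDcont : ContinuousOn D (Set.Icc 0 (1/2)) :=
    hC.continuousOn_derivWithin hU le_rfl
  have hmc : ContinuousOn m (Set.Icc 0 (1/2)) := hC.continuousOn
  have hgpos : ∀ r ∈ Set.Icc (0:ℝ) (1/2), 0 < m r * (1 - m r) := by
    intro r hr
    have := hm r hr
    nlinarith [this.1, this.2]
  set f : ℝ → ℝ := fun r => D r / Real.sqrt (m r * (1 - m r)) with hf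
  have hfc : ContinuousOn f (Set.Icc 0 (1/2)) := by
    apply hDcont.div
    · exact Real.continuous_sqrt.comp_continuousOn (hmc.mul (continuousOn_const.sub hmc))
    · intro r hr
      exact ne_of_gt (Real.sqrt_pos.2 (hgpos r hr))
  set θ : ℝ → ℝ := fun r => Real.arcsin (2 * m r - 1) with hθ
  have hderiv : ∀ r ∈ Set.Icc (0:ℝ) (1/2),
      HasDerivWithinAt θ (f r) (Set.Icc 0 (1/2)) r := by
    intro r hr
    have hmr := hm r hr
    have hmd : HasDerivWithinAt m (D r) (Set.Icc 0 (1/2)) r :=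
      (hC.differentiableOn one_ne_zero r hr).hasDerivWithinAt
    have hin : HasDerivWithinAt (fun r => 2 * m r - 1) (2 * D r) (Set.Icc 0 (1/2)) r := by
      simpa using ((hmd.const_mul 2).sub_const 1)
    have hx1 : (2 * m r - 1) ≠ -1 := by nlinarith [hmr.1]
    have hx2 : (2 * m r - 1) ≠ 1 := by nlinarith [hmr.2]
    have harc := (Real.hasDerivAt_arcsin hx1 hx2).comp_hasDerivWithinAt r hin
    have heq : 1 / Real.sqrt (1 - (2 * m r - 1) ^ 2) * (2 * D r) = f r := by
      have h4 : 1 - (2 * m r - 1) ^ 2 = 4 * (m r * (1 - m r)) := by ring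
      rw [h4]
      rw [show (4 : ℝ) * (m r * (1 - m r)) = 2^2 * (m r * (1 - m r)) by norm_num]
      rw [Real.sqrt_mul (by positivity), Real.sqrt_sq (by norm_num : (0:ℝ) ≤ 2)]
      have hs : Real.sqrt (m r * (1 - m r)) ≠ 0 := ne_of_gt (Real.sqrt_pos.2 (hgpos r hr))
      simp only [hf]
      field_simp
    rw [← heq]
    exact harc
  have hθc : ContinuousOn θ (Set.Icc 0 (1/2)) := fun r hr => (hderiv r hr).continuousWithinAt
  have hfint : IntervalIntegrable f volume 0 (1/2) := by
    apply ContinuousOn.intervalIntegrable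
    rwa [Set.uIcc_of_le h2.le]
  have hFTC : ∫ r in (0:ℝ)..(1/2), f r = θ (1/2) - θ 0 := by
    apply intervalIntegral.integral_eq_sub_of_hasDeriv_right_of_le h2.le hθc _ hfint
    intro x hx
    have hx' : x ∈ Set.Icc (0:ℝ) (1/2) := Set.mem_Icc_of_Ioo hx
    have := (hderiv x hx').hasDerivAt (Icc_mem_nhds hx.1 hx.2)
    exact this.hasDerivWithinAt
  set Δ : ℝ := ∫ r in (0:ℝ)..(1/2), f r with hΔ
  have hf2int : IntervalIntegrable (fun r => f r ^ 2) volume 0 (1/2) := by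
    apply ContinuousOn.intervalIntegrable
    rw [Set.uIcc_of_le h2.le]
    exact hfc.pow 2
  have hCS : 2 * Δ ^ 2 ≤ ∫ r in (0:ℝ)..(1/2), f r ^ 2 := by
    have hnn : 0 ≤ ∫ r in (0:ℝ)..(1/2), (f r - 2 * Δ) ^ 2 :=
      intervalIntegral.integral_nonneg h2.le (fun r _ => sq_nonneg _)
    have hexp : ∫ r in (0:ℝ)..(1/2), (f r - 2 * Δ) ^ 2
        = (∫ r in (0:ℝ)..(1/2), f r ^ 2) - (4 * Δ) * Δ + (4 * Δ ^ 2) * (1/2) := by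
      have e1 : (fun r => (f r - 2 * Δ) ^ 2)
          = fun r => (f r ^ 2 - (4 * Δ) * f r) + 4 * Δ ^ 2 := funext fun r => by ring
      rw [show (∫ r in (0:ℝ)..(1/2), (f r - 2 * Δ) ^ 2)
          = ∫ r in (0:ℝ)..(1/2), ((f r ^ 2 - (4 * Δ) * f r) + 4 * Δ ^ 2) from by rw [e1]]
      rw [intervalIntegral.integral_add (hf2int.sub ((hfint.const_mul _)))
        intervalIntegrable_const,
        intervalIntegral.integral_sub hf2int (hfint.const_mul _),
        intervalIntegral.integral_const_mul, intervalIntegral.integral_const,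
        ← hΔ, smul_eq_mul]
      ring
    rw [hexp] at hnn
    linarith
  have hcongr : ∫ r in (0:ℝ)..(1/2), D r ^ 2 / (m r * (1 - m r))
      = ∫ r in (0:ℝ)..(1/2), f r ^ 2 := by
    apply intervalIntegral.integral_congr
    intro r hr
    rw [Set.uIcc_of_le h2.le] at hr
    have hg := hgpos r hr
    simp only [hf, div_pow, Real.sq_sqrt hg.le]
  have hΔval : Δ = Real.arcsin (2*α - 1) - Real.arcsin (2*β - 1) := by
    rw [hFTC]; simp only [hθ]; norm_num [h0, h1]
  rw [hcongr]
  have hpi := Real.pi_pos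
  have : (Real.arcsin (2*β - 1) - Real.arcsin (2*α - 1)) ^ 2 = Δ ^ 2 := by
    rw [hΔval]; ring
  rw [this]
  nlinarith [hCS, hpi]


lemma aux_mem (α β : ℝ) (hα : α ∈ Set.Ioo (0:ℝ) 1) (hβ : β ∈ Set.Ioo (0:ℝ) 1) :
    ∃ m : ℝ → ℝ,
        ContDiffOn ℝ 1 m (Set.Icc 0 (1/2)) ∧
        (∀ r ∈ Set.Icc (0:ℝ) (1/2), m r ∈ Set.Ioo (0:ℝ) 1) ∧
        m 0 = β ∧ m (1/2) = α ∧
        (Real.pi/2) * (Real.arcsin (2*β - 1) - Real.arcsin (2*α - 1)) ^ 2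
          = (Real.pi/4) * ∫ r in (0:ℝ)..(1/2),
              (derivWithin m (Set.Icc 0 (1/2)) r) ^ 2 / (m r * (1 - m r)) := by
  set a := Real.arcsin (2*β - 1) with ha
  set b := Real.arcsin (2*α - 1) with hb
  have hβ1 : (-1:ℝ) < 2*β - 1 := by nlinarith [hβ.1]
  have hβ2 : 2*β - 1 < 1 := by nlinarith [hβ.2]
  have hα1 : (-1:ℝ) < 2*α - 1 := by nlinarith [hα.1]
  have hα2 : 2*α - 1 < 1 := by nlinarith [hα.2]
  have haI : a ∈ Set.Ioo (-(Real.pi/2)) (Real.pi/2) :=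
    ⟨Real.neg_pi_div_two_lt_arcsin.2 hβ1, Real.arcsin_lt_pi_div_two.2 hβ2⟩
  have hbI : b ∈ Set.Ioo (-(Real.pi/2)) (Real.pi/2) :=
    ⟨Real.neg_pi_div_two_lt_arcsin.2 hα1, Real.arcsin_lt_pi_div_two.2 hα2⟩
  set c := 2 * (b - a) with hc
  set m : ℝ → ℝ := fun r => (1 + Real.sin (a + c * r)) / 2 with hm
  have hmint : ∀ r ∈ Set.Icc (0:ℝ) (1/2), a + c * r ∈ Set.Ioo (-(Real.pi/2)) (Real.pi/2) := by
    intro r hr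
    obtain ⟨hr0, hr1⟩ := hr
    rcases le_total a b with hab | hab
    · have hc0 : 0 ≤ c := by rw [hc]; linarith
      have h1 : a ≤ a + c * r := by nlinarith [mul_nonneg hc0 hr0]
      have h2 : a + c * r ≤ b := by nlinarith [mul_le_mul_of_nonneg_left hr1 hc0]
      exact ⟨lt_of_lt_of_le haI.1 h1, lt_of_le_of_lt h2 hbI.2⟩
    · have hc0 : c ≤ 0 := by rw [hc]; linarith
      have h1 : a + c * r ≤ a := by nlinarith [mul_nonpos_of_nonpos_of_nonneg hc0 hr0]
      have h2 : b ≤ a + c * r := by nlinarith [mul_le_mul_of_nonpos_left hr1 hc0]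
      exact ⟨lt_of_lt_of_le hbI.1 h2, lt_of_le_of_lt h1 haI.2⟩
  have hcd : ContDiff ℝ 1 m := by
    apply ContDiff.div_const
    exact contDiff_const.add ((Real.contDiff_sin.comp
      (contDiff_const.add (contDiff_const.mul contDiff_id))))
  have hrange : ∀ r ∈ Set.Icc (0:ℝ) (1/2), m r ∈ Set.Ioo (0:ℝ) 1 := by
    intro r hr
    have hx := hmint r hr
    have hlt : Real.sin (a + c * r) < 1 := by
      have := Real.strictMonoOn_sin (Set.mem_Icc.2 ⟨hx.1.le, hx.2.le⟩)
        (Set.mem_Icc.2 ⟨by linarith [Real.pi_pos], le_refl (Real.pi/2)⟩) hx.2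
      simpa using this
    have hgt : -1 < Real.sin (a + c * r) := by
      have := Real.strictMonoOn_sin
        (Set.mem_Icc.2 ⟨le_refl (-(Real.pi/2)), by linarith [Real.pi_pos]⟩)
        (Set.mem_Icc.2 ⟨hx.1.le, hx.2.le⟩) hx.1
      simpa using this
    constructor
    · simp only [hm]; linarith
    · simp only [hm]; linarith
  have hm0 : m 0 = β := by
    simp only [hm, mul_zero, add_zero]
    rw [ha, Real.sin_arcsin hβ1.le hβ2.le]; ring
  have hm1 : m (1/2) = α := by
    simp only [hm]
    have : a + c * (1/2) = b := by rw [hc]; ring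
    rw [this, hb, Real.sin_arcsin hα1.le hα2.le]; ring
  have hderiv : ∀ r : ℝ, HasDerivAt m (Real.cos (a + c * r) * c / 2) r := by
    intro r
    have h1 : HasDerivAt (fun r : ℝ => a + c * r) c r := by
      simpa using ((hasDerivAt_id r).const_mul c).const_add a
    have h2 := (Real.hasDerivAt_sin (a + c * r)).comp r h1
    have h3 := (h2.const_add 1).div_const 2
    exact h3
  have hdw : ∀ r ∈ Set.Icc (0:ℝ) (1/2),
      derivWithin m (Set.Icc 0 (1/2)) r = Real.cos (a + c * r) * c / 2 := by
    intro r hr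
    rw [DifferentiableAt.derivWithin (hderiv r).differentiableAt
      (uniqueDiffOn_Icc (by norm_num) r hr)]
    exact (hderiv r).deriv
  have hint : ∫ r in (0:ℝ)..(1/2),
      (derivWithin m (Set.Icc 0 (1/2)) r) ^ 2 / (m r * (1 - m r))
      = ∫ r in (0:ℝ)..(1/2), c ^ 2 := by
    apply intervalIntegral.integral_congr
    intro r hr
    rw [Set.uIcc_of_le (by norm_num : (0:ℝ) ≤ 1/2)] at hr
    show (derivWithin m (Set.Icc 0 (1/2)) r) ^ 2 / (m r * (1 - m r)) = c ^ 2
    rw [hdw r hr]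
    have hx := hmint r hr
    have hcos : 0 < Real.cos (a + c * r) := Real.cos_pos_of_mem_Ioo hx
    have hden : m r * (1 - m r) = Real.cos (a + c * r) ^ 2 / 4 := by
      simp only [hm]
      have := Real.sin_sq_add_cos_sq (a + c * r)
      nlinarith [this]
    rw [hden]
    field_simp [hcos.ne']
    ring
  refine ⟨m, hcd.contDiffOn, hrange, hm0, hm1, ?_⟩
  rw [hint, intervalIntegral.integral_const, smul_eq_mul]
  rw [hc]
  ring

/-- The variational formula for the occupation-time rate function: the infimum of
`(π/4)∫₀^{1/2} m'(r)²/(m(r)(1-m(r))) dr` over continuously differentiable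
`m : [0,1/2] → (0,1)` with `m(0) = β` and `m(1/2) = α` equals
`(π/2)(arcsin(2β-1) - arcsin(2α-1))²`. -/

theorem stmt7 (α β : ℝ) (hα : α ∈ Set.Ioo (0:ℝ) 1) (hβ : β ∈ Set.Ioo (0:ℝ) 1) :
    sInf {y : ℝ | ∃ m : ℝ → ℝ,
        ContDiffOn ℝ 1 m (Set.Icc 0 (1/2)) ∧
        (∀ r ∈ Set.Icc (0:ℝ) (1/2), m r ∈ Set.Ioo (0:ℝ) 1) ∧
        m 0 = β ∧ m (1/2) = α ∧
        y = (Real.pi/4) * ∫ r in (0:ℝ)..(1/2),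
              (derivWithin m (Set.Icc 0 (1/2)) r) ^ 2 / (m r * (1 - m r))}
      = (Real.pi/2) * (Real.arcsin (2*β - 1) - Real.arcsin (2*α - 1)) ^ 2 := by
  set v := (Real.pi/2) * (Real.arcsin (2*β - 1) - Real.arcsin (2*α - 1)) ^ 2 with hv
  have hlb : ∀ y ∈ {y : ℝ | ∃ m : ℝ → ℝ,
        ContDiffOn ℝ 1 m (Set.Icc 0 (1/2)) ∧
        (∀ r ∈ Set.Icc (0:ℝ) (1/2), m r ∈ Set.Ioo (0:ℝ) 1) ∧
        m 0 = β ∧ m (1/2) = α ∧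
        y = (Real.pi/4) * ∫ r in (0:ℝ)..(1/2),
              (derivWithin m (Set.Icc 0 (1/2)) r) ^ 2 / (m r * (1 - m r))}, v ≤ y := by
    rintro y ⟨m, hC, hm, h0, h1, rfl⟩
    exact aux_lower α β hα hβ m hC hm h0 h1
  have hmem : v ∈ {y : ℝ | ∃ m : ℝ → ℝ,
        ContDiffOn ℝ 1 m (Set.Icc 0 (1/2)) ∧
        (∀ r ∈ Set.Icc (0:ℝ) (1/2), m r ∈ Set.Ioo (0:ℝ) 1) ∧
        m 0 = β ∧ m (1/2) = α ∧
        y = (Real.pi/4) * ∫ r in (0:ℝ)..(1/2),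
              (derivWithin m (Set.Icc 0 (1/2)) r) ^ 2 / (m r * (1 - m r))} := by
    obtain ⟨m, hC, hm, h0, h1, hcost⟩ := aux_mem α β hα hβ
    exact ⟨m, hC, hm, h0, h1, hcost⟩
  exact le_antisymm (csInf_le ⟨v, hlb⟩ hmem) (le_csInf ⟨v, hmem⟩ hlb)
end
end

section
/- Fix 0<α<1 and let ν_α be the Bernoulli product probability measure on {0,1}^{ℤ²} with ν_α{η : η(x) = 1} = α for every x ∈ ℤ². Let H:(0,∞)→ℝ be continuous with compact support in (0,∞), fix T ≥ 2, and define V_T(η) = Σ_{j=1,2} Σ_{x ∈ ℤ²∖{0}} (x_j/|x|²) H(σ_T(x)) [η(x+e_j) − η(x)] − (1/log T) Σ_{j=1,2} Σ_{x ∈ ℤ²∖{0}} (x_j²/|x|⁴) H(σ_T(x))² [η(x+e_j) − η(x)]². Then for every bounded measurable f:{0,1}^{ℤ²}→[0,∞) with ∫ f dν_α = 1: ∫ V_T(η) f(η) ν_α(dη) ≤ (log T / 4) Σ_{j=1,2} Σ_{x ∈ ℤ²} ∫ ( √(f(σ^{x,x+e_j} η)) − √(f(η)) )² ν_α(dη).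 -/
open MeasureTheory Set Filter
open scoped ENNReal Classical

noncomputable section

/-- Square of the Euclidean norm of a point of `ℤ²`. -/
def nsq (x : ℤ × ℤ) : ℝ := ((x.1 : ℝ)) ^ 2 + ((x.2 : ℝ)) ^ 2

/-- Euclidean norm of a point of `ℤ²`. -/
def enorm2 (x : ℤ × ℤ) : ℝ := Real.sqrt (nsq x)

/-- `σ_T(x) = log |x| / log T`. -/
def sig (T : ℝ) (x : ℤ × ℤ) : ℝ := Real.log (enorm2 x) / Real.log T

/-- Occupation variable, as a real number. -/
def ind (b : Bool) : ℝ := if b then 1 else 0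

/-- The configuration obtained from `η` by exchanging the occupation variables at `x`
and `y`. -/
def swapConf (x y : ℤ × ℤ) (η : ℤ × ℤ → Bool) : ℤ × ℤ → Bool :=
  fun z => if z = x then η y else if z = y then η x else η z

/-- The function `V_T(η)`: discrete gradient term minus quadratic term. -/
def VT (T : ℝ) (H : ℝ → ℝ) (η : ℤ × ℤ → Bool) : ℝ :=
  ((∑' x : ℤ × ℤ,
      if x ≠ 0 then ((x.1 : ℝ) / nsq x) * H (sig T x) *
        (ind (η (x + (1, 0))) - ind (η x)) else 0)
    + ∑' x : ℤ × ℤ,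
        if x ≠ 0 then ((x.2 : ℝ) / nsq x) * H (sig T x) *
          (ind (η (x + (0, 1))) - ind (η x)) else 0)
  - (1 / Real.log T) *
    ((∑' x : ℤ × ℤ,
        if x ≠ 0 then (((x.1 : ℝ)) ^ 2 / (nsq x) ^ 2) * (H (sig T x)) ^ 2 *
          (ind (η (x + (1, 0))) - ind (η x)) ^ 2 else 0)
      + ∑' x : ℤ × ℤ,
          if x ≠ 0 then (((x.2 : ℝ)) ^ 2 / (nsq x) ^ 2) * (H (sig T x)) ^ 2 *
            (ind (η (x + (0, 1))) - ind (η x)) ^ 2 else 0)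

/-! ### Auxiliary material -/

/-- Configuration space. -/
abbrev Conf := (ℤ × ℤ) → Bool

/-- The π-system of cylinder sets. -/
def Cyl : Set (Set Conf) := {A | ∃ S : Finset (ℤ × ℤ), A = {η : Conf | ∀ x ∈ S, η x = true}}

lemma cyl_measurable (S : Finset (ℤ × ℤ)) :
    MeasurableSet {η : Conf | ∀ x ∈ S, η x = true} := by
  have h1 : {η : Conf | ∀ x ∈ S, η x = true} = ⋂ x ∈ S, (fun η : Conf => η x) ⁻¹' {true} := by
    ext η; simp
  rw [h1]
  exact MeasurableSet.biInter S.countable_toSet fun x _ =>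
    (measurable_pi_apply x) (show MeasurableSet ({true} : Set Bool) from trivial)

lemma isPiSystem_cyl : IsPiSystem Cyl := by
  rintro A ⟨S, rfl⟩ B ⟨S', rfl⟩ -
  refine ⟨S ∪ S', ?_⟩
  ext η
  simp only [mem_inter_iff, mem_setOf_eq, Finset.mem_union]
  constructor
  · rintro ⟨h1, h2⟩ x hx
    rcases hx with hx | hx
    exacts [h1 x hx, h2 x hx]
  · intro h
    exact ⟨fun x hx => h x (Or.inl hx), fun x hx => h x (Or.inr hx)⟩

lemma pi_eq_gen : (inferInstance : MeasurableSpace Conf) = MeasurableSpace.generateFrom Cyl := by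
  apply le_antisymm
  · show MeasurableSpace.pi ≤ _
    refine iSup_le fun i => ?_
    rw [MeasurableSpace.comap_le_iff_le_map]
    intro s _
    show MeasurableSet[MeasurableSpace.generateFrom Cyl] ((fun η : Conf => η i) ⁻¹' s)
    by_cases ht : true ∈ s <;> by_cases hfal : false ∈ s
    · have : s = univ := by ext b; cases b <;> simp [ht, hfal]
      rw [this, Set.preimage_univ]
      exact @MeasurableSet.univ _ (MeasurableSpace.generateFrom Cyl)
    · have : s = {true} := by ext b; cases b <;> simp [ht, hfal]
      rw [this]
      have he : (fun η : Conf => η i) ⁻¹' {true}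
          = {η : Conf | ∀ x ∈ ({i} : Finset (ℤ × ℤ)), η x = true} := by
        ext η; simp
      rw [he]
      have hmem : {η : Conf | ∀ x ∈ ({i} : Finset (ℤ × ℤ)), η x = true} ∈ Cyl := ⟨{i}, rfl⟩
      exact MeasurableSpace.measurableSet_generateFrom hmem
    · have : s = {false} := by ext b; cases b <;> simp [ht, hfal]
      rw [this]
      have : (fun η : Conf => η i) ⁻¹' {false} = {η : Conf | ∀ x ∈ ({i} : Finset (ℤ×ℤ)), η x = true}ᶜ := by
        ext η; simp
      rw [this]
      have hmem : {η : Conf | ∀ x ∈ ({i} : Finset (ℤ × ℤ)), η x = true} ∈ Cyl := ⟨{i}, rfl⟩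
      exact (MeasurableSpace.measurableSet_generateFrom hmem).compl
    · have : s = ∅ := by ext b; cases b <;> simp [ht, hfal]
      rw [this, Set.preimage_empty]
      exact @MeasurableSet.empty _ (MeasurableSpace.generateFrom Cyl)
  · refine MeasurableSpace.generateFrom_le ?_
    rintro A ⟨S, rfl⟩
    exact cyl_measurable S

lemma swap_meas (x y : ℤ × ℤ) : Measurable (swapConf x y) := by
  refine measurable_pi_lambda _ fun z => ?_
  unfold swapConf
  split_ifs <;> exact measurable_pi_apply _

lemma swap_eq_equiv (x y : ℤ × ℤ) (η : Conf) (z : ℤ × ℤ) :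
    swapConf x y η z = η (Equiv.swap x y z) := by
  rw [Equiv.swap_apply_def]
  unfold swapConf
  split_ifs <;> rfl

lemma map_swap {α : ℝ} (ν : Measure Conf) [IsProbabilityMeasure ν]
    (hprod : ∀ S : Finset (ℤ × ℤ),
      ν {η | ∀ x ∈ S, η x = true} = ENNReal.ofReal (α ^ S.card))
    (x y : ℤ × ℤ) : Measure.map (swapConf x y) ν = ν := by
  have hm := swap_meas x y
  refine ext_of_generate_finite Cyl pi_eq_gen isPiSystem_cyl ?_ ?_
  · rintro A ⟨S, rfl⟩
    rw [Measure.map_apply hm (cyl_measurable S)]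
    have hpre : swapConf x y ⁻¹' {η : Conf | ∀ z ∈ S, η z = true}
        = {η : Conf | ∀ z ∈ S.image (Equiv.swap x y), η z = true} := by
      ext η
      simp only [mem_preimage, mem_setOf_eq, Finset.mem_image]
      constructor
      · rintro h w ⟨z, hz, rfl⟩
        have := h z hz; rwa [swap_eq_equiv] at this
      · intro h z hz
        rw [swap_eq_equiv]
        exact h _ ⟨z, hz, rfl⟩
    rw [hpre, hprod, hprod, Finset.card_image_of_injective S (Equiv.swap x y).injective]
  · have : IsProbabilityMeasure (Measure.map (swapConf x y) ν) :=
      Measure.isProbabilityMeasure_map hm.aemeasurable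
    simp [this.measure_univ]

lemma integrable_of_bdd {Ω : Type*} [MeasurableSpace Ω] (ν : Measure Ω) [IsFiniteMeasure ν]
    {g : Ω → ℝ} (hg : Measurable g) {C : ℝ} (hC : ∀ ω, |g ω| ≤ C) : Integrable g ν :=
  Integrable.mono' (integrable_const C) hg.aestronglyMeasurable
    (Filter.Eventually.of_forall fun ω => by simpa using hC ω)

lemma amgm (L a b : ℝ) (hL : 0 < L) : a * b ≤ L / 2 * a ^ 2 + 1 / (2 * L) * b ^ 2 := by
  have h2L : (0:ℝ) < 2 * L := by linarith
  rw [← mul_le_mul_iff_right₀ h2L]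
  have hre : 2 * L * (L / 2 * a ^ 2 + 1 / (2 * L) * b ^ 2) = L ^ 2 * a ^ 2 + b ^ 2 := by
    field_simp
  rw [hre]
  nlinarith [sq_nonneg (L * a - b)]

lemma int1 {Ω : Type*} [MeasurableSpace Ω] (ν : Measure Ω) [IsFiniteMeasure ν]
    (c : ℝ) {v g : Ω → ℝ} (hv : Measurable v) (hvb : ∀ ω, |v ω| ≤ 1)
    (hg : Measurable g) {M0 : ℝ} (hgb : ∀ ω, |g ω| ≤ M0) :
    Integrable (fun ω => c * v ω * g ω) ν := by
  apply integrable_of_bdd ν (by fun_prop) (C := |c| * M0)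
  intro ω
  rw [abs_mul, abs_mul]
  have h1 : |c| * |v ω| * |g ω| ≤ |c| * 1 * M0 :=
    mul_le_mul (mul_le_mul_of_nonneg_left (hvb ω) (abs_nonneg c)) (hgb ω) (abs_nonneg _)
      (by positivity)
  simpa using h1

lemma int2 {Ω : Type*} [MeasurableSpace Ω] (ν : Measure Ω) [IsFiniteMeasure ν]
    (c : ℝ) {v g : Ω → ℝ} (hv : Measurable v) (hvb : ∀ ω, |v ω| ≤ 1)
    (hg : Measurable g) {M0 : ℝ} (hgb : ∀ ω, |g ω| ≤ M0) :
    Integrable (fun ω => c ^ 2 * v ω ^ 2 * g ω) ν := by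
  apply integrable_of_bdd ν (by fun_prop) (C := c ^ 2 * M0)
  intro ω
  have ha2 : v ω ^ 2 ≤ 1 := by nlinarith [sq_abs (v ω), abs_nonneg (v ω), hvb ω]
  have heq : |c ^ 2 * v ω ^ 2 * g ω| = c ^ 2 * v ω ^ 2 * |g ω| := by
    rw [abs_mul, abs_of_nonneg (by positivity : (0:ℝ) ≤ c ^ 2 * v ω ^ 2)]
  rw [heq]
  have h1 : c ^ 2 * v ω ^ 2 * |g ω| ≤ c ^ 2 * 1 * M0 :=
    mul_le_mul (mul_le_mul_of_nonneg_left ha2 (sq_nonneg c)) (hgb ω) (abs_nonneg _)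
      (by positivity)
  simpa using h1

lemma intD {Ω : Type*} [MeasurableSpace Ω] (ν : Measure Ω) [IsFiniteMeasure ν]
    {σ : Ω → Ω} (hσ : Measurable σ) {g : Ω → ℝ} (hg : Measurable g)
    (hg0 : ∀ ω, 0 ≤ g ω) {M0 : ℝ} (hM0 : 0 ≤ M0) (hgb : ∀ ω, g ω ≤ M0) :
    Integrable (fun ω => (Real.sqrt (g (σ ω)) - Real.sqrt (g ω)) ^ 2) ν := by
  apply integrable_of_bdd ν (by fun_prop) (C := 4 * M0)
  intro ω
  rw [abs_of_nonneg (sq_nonneg _)]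
  have h1 := Real.sqrt_nonneg (g ω)
  have h2 := Real.sqrt_nonneg (g (σ ω))
  have h3 : Real.sqrt (g ω) ≤ Real.sqrt M0 := Real.sqrt_le_sqrt (hgb ω)
  have h4 : Real.sqrt (g (σ ω)) ≤ Real.sqrt M0 := Real.sqrt_le_sqrt (hgb (σ ω))
  have h5 : Real.sqrt M0 ^ 2 = M0 := Real.sq_sqrt hM0
  nlinarith

lemma core {Ω : Type*} [MeasurableSpace Ω] (ν : Measure Ω) [IsProbabilityMeasure ν]
    (σ : Ω → Ω) (hσ : Measurable σ) (hinv : Measure.map σ ν = ν)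
    (u : Ω → ℝ) (hu : Measurable u) (hub : ∀ ω, |u ω| ≤ 1) (huσ : ∀ ω, u (σ ω) = - u ω)
    (c L : ℝ) (hL : 0 < L)
    (f : Ω → ℝ) (hf : Measurable f) (hf0 : ∀ ω, 0 ≤ f ω) (M : ℝ) (hfb : ∀ ω, f ω ≤ M) :
    ∫ ω, c * u ω * f ω ∂ν - 1 / L * ∫ ω, c ^ 2 * u ω ^ 2 * f ω ∂ν
      ≤ L / 4 * ∫ ω, (Real.sqrt (f (σ ω)) - Real.sqrt (f ω)) ^ 2 ∂ν := by
  set M0 : ℝ := max M 0 with hM0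
  have hfM0 : ∀ ω, f ω ≤ M0 := fun ω => le_max_of_le_left (hfb ω)
  have hfabs : ∀ ω, |f ω| ≤ M0 := fun ω => abs_le.2 ⟨by linarith [hf0 ω, le_max_right M 0], hfM0 ω⟩
  have hM0nn : 0 ≤ M0 := le_max_right M 0
  have hswap : ∀ g : Ω → ℝ, Measurable g → Integrable g ν →
      ∫ ω, g (σ ω) ∂ν = ∫ ω, g ω ∂ν := by
    intro g hg _
    have h1 : ∫ y, g y ∂(Measure.map σ ν) = ∫ ω, g (σ ω) ∂ν :=
      integral_map hσ.aemeasurable (by rw [hinv]; exact hg.aestronglyMeasurable)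
    rw [hinv] at h1
    exact h1.symm
  have hfσ : Measurable (fun ω => f (σ ω)) := hf.comp hσ
  have hg1 : Integrable (fun ω => c * u ω * f ω) ν := int1 ν c hu hub hf hfabs
  have hg1σ : Integrable (fun ω => c * u ω * f (σ ω)) ν :=
    int1 ν c hu hub hfσ (fun ω => hfabs (σ ω))
  have hg2 : Integrable (fun ω => c ^ 2 * u ω ^ 2 * f ω) ν := int2 ν c hu hub hf hfabs
  have hg2σ : Integrable (fun ω => c ^ 2 * u ω ^ 2 * f (σ ω)) ν :=
    int2 ν c hu hub hfσ (fun ω => hfabs (σ ω))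
  have hD : Integrable (fun ω => (Real.sqrt (f (σ ω)) - Real.sqrt (f ω)) ^ 2) ν :=
    intD ν hσ hf hf0 hM0nn hfM0
  have hA : ∫ ω, c * u ω * f (σ ω) ∂ν = - ∫ ω, c * u ω * f ω ∂ν := by
    have h1 := hswap (fun ω => c * u ω * f ω) (by fun_prop) hg1
    have h2 : (fun ω => c * u (σ ω) * f (σ ω)) = fun ω => -(c * u ω * f (σ ω)) := by
      funext ω; rw [huσ ω]; ring
    rw [h2] at h1
    rw [integral_neg] at h1
    linarith [h1]
  have hQ : ∫ ω, c ^ 2 * u ω ^ 2 * f (σ ω) ∂ν = ∫ ω, c ^ 2 * u ω ^ 2 * f ω ∂ν := by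
    have h1 := hswap (fun ω => c ^ 2 * u ω ^ 2 * f ω) (by fun_prop) hg2
    have h2 : (fun ω => c ^ 2 * u (σ ω) ^ 2 * f (σ ω)) = fun ω => c ^ 2 * u ω ^ 2 * f (σ ω) := by
      funext ω; rw [huσ ω]; ring
    rw [h2] at h1
    exact h1
  have point : ∀ ω, c * u ω * f ω - c * u ω * f (σ ω) ≤
      L / 2 * (Real.sqrt (f (σ ω)) - Real.sqrt (f ω)) ^ 2
        + 1 / L * (c ^ 2 * u ω ^ 2 * f ω + c ^ 2 * u ω ^ 2 * f (σ ω)) := by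
    intro ω
    set s1 := Real.sqrt (f ω) with hs1
    set s2 := Real.sqrt (f (σ ω)) with hs2
    have hsf : s1 ^ 2 = f ω := Real.sq_sqrt (hf0 ω)
    have hsfσ : s2 ^ 2 = f (σ ω) := Real.sq_sqrt (hf0 (σ ω))
    have h1 := amgm L (s1 - s2) (c * u ω * (s1 + s2)) hL
    have hq : 1 / (2 * L) * (c * u ω * (s1 + s2)) ^ 2
        ≤ 1 / L * (c ^ 2 * u ω ^ 2 * f ω + c ^ 2 * u ω ^ 2 * f (σ ω)) := by
      have he : (c * u ω * (s1 + s2)) ^ 2 = c ^ 2 * u ω ^ 2 * (s1 + s2) ^ 2 := by ring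
      rw [he]
      have hsum : (s1 + s2) ^ 2 ≤ 2 * (s1 ^ 2 + s2 ^ 2) := by nlinarith [sq_nonneg (s1 - s2)]
      have h2 : c ^ 2 * u ω ^ 2 * (s1 + s2) ^ 2 ≤ c ^ 2 * u ω ^ 2 * (2 * (s1 ^ 2 + s2 ^ 2)) :=
        mul_le_mul_of_nonneg_left hsum (by positivity)
      calc 1 / (2 * L) * (c ^ 2 * u ω ^ 2 * (s1 + s2) ^ 2)
          ≤ 1 / (2 * L) * (c ^ 2 * u ω ^ 2 * (2 * (s1 ^ 2 + s2 ^ 2))) := by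
            apply mul_le_mul_of_nonneg_left h2 (by positivity)
        _ = 1 / L * (c ^ 2 * u ω ^ 2 * s1 ^ 2 + c ^ 2 * u ω ^ 2 * s2 ^ 2) := by
            field_simp
        _ = 1 / L * (c ^ 2 * u ω ^ 2 * f ω + c ^ 2 * u ω ^ 2 * f (σ ω)) := by
            rw [hsf, hsfσ]
    have hid : c * u ω * f ω - c * u ω * f (σ ω) = (s1 - s2) * (c * u ω * (s1 + s2)) := by
      rw [← hsf, ← hsfσ]; ring
    have hsq : (s1 - s2) ^ 2 = (s2 - s1) ^ 2 := by ring
    rw [hid]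
    calc (s1 - s2) * (c * u ω * (s1 + s2))
        ≤ L / 2 * (s1 - s2) ^ 2 + 1 / (2 * L) * (c * u ω * (s1 + s2)) ^ 2 := h1
      _ ≤ L / 2 * (s2 - s1) ^ 2
            + 1 / L * (c ^ 2 * u ω ^ 2 * f ω + c ^ 2 * u ω ^ 2 * f (σ ω)) := by
          rw [hsq] at *; linarith
  have hint : ∫ ω, (c * u ω * f ω - c * u ω * f (σ ω)) ∂ν
      ≤ ∫ ω, (L / 2 * (Real.sqrt (f (σ ω)) - Real.sqrt (f ω)) ^ 2
        + 1 / L * (c ^ 2 * u ω ^ 2 * f ω + c ^ 2 * u ω ^ 2 * f (σ ω))) ∂ν := by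
    have hq12 : Integrable (fun ω => c ^ 2 * u ω ^ 2 * f ω + c ^ 2 * u ω ^ 2 * f (σ ω)) ν :=
      hg2.add hg2σ
    apply integral_mono (hg1.sub hg1σ) ((hD.const_mul _).add (hq12.const_mul _))
    exact point
  have hq12 : Integrable (fun ω => c ^ 2 * u ω ^ 2 * f ω + c ^ 2 * u ω ^ 2 * f (σ ω)) ν :=
    hg2.add hg2σ
  rw [integral_sub hg1 hg1σ, hA, integral_add (hD.const_mul _) (hq12.const_mul _),
    integral_const_mul, integral_const_mul, integral_add hg2 hg2σ, hQ] at hint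
  linarith

/-- Coefficient for direction 1. -/
def cf1 (T : ℝ) (H : ℝ → ℝ) (x : ℤ × ℤ) : ℝ :=
  if x = 0 then 0 else (x.1 : ℝ) / nsq x * H (sig T x)

/-- Coefficient for direction 2. -/
def cf2 (T : ℝ) (H : ℝ → ℝ) (x : ℤ × ℤ) : ℝ :=
  if x = 0 then 0 else (x.2 : ℝ) / nsq x * H (sig T x)

/-- Discrete gradient. -/
def uu (e x : ℤ × ℤ) (η : Conf) : ℝ := ind (η (x + e)) - ind (η x)

lemma uu_meas (e x : ℤ × ℤ) : Measurable (uu e x) := by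
  unfold uu
  have h1 : Measurable (ind : Bool → ℝ) := measurable_of_countable _
  exact (h1.comp (measurable_pi_apply _)).sub (h1.comp (measurable_pi_apply _))

lemma uu_bdd (e x : ℤ × ℤ) (η : Conf) : |uu e x η| ≤ 1 := by
  unfold uu
  cases hz : η (x + e) <;> cases hw : η x <;> norm_num [ind, hz, hw]

lemma add_ne_self1 (x : ℤ × ℤ) : x + ((1 : ℤ), (0 : ℤ)) ≠ x := by
  intro h
  have := congrArg Prod.fst h
  simp at this

lemma add_ne_self2 (x : ℤ × ℤ) : x + ((0 : ℤ), (1 : ℤ)) ≠ x := by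
  intro h
  have := congrArg Prod.snd h
  simp at this

lemma uu_swap (e x : ℤ × ℤ) (hne : x + e ≠ x) (η : Conf) :
    uu e x (swapConf x (x + e) η) = - uu e x η := by
  unfold uu swapConf
  rw [if_neg hne, if_pos rfl, if_pos rfl]
  ring
/-- The integration-by-parts bound: for any density `f` with respect to the Bernoulli
product measure `ν_α`, `∫ V_T f dν_α` is bounded by `(log T/4)` times the Dirichlet
form of `√f`. -/
theorem stmt16 (α : ℝ) (hα : α ∈ Set.Ioo (0:ℝ) 1)
    (ν : Measure ((ℤ × ℤ) → Bool)) (hν : IsProbabilityMeasure ν)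
    (hprod : ∀ S : Finset (ℤ × ℤ),
      ν {η | ∀ x ∈ S, η x = true} = ENNReal.ofReal (α ^ S.card))
    (H : ℝ → ℝ) (hH : Continuous H) (hHc : HasCompactSupport H)
    (hHs : tsupport H ⊆ Set.Ioi 0)
    (T : ℝ) (hT : 2 ≤ T)
    (f : ((ℤ × ℤ) → Bool) → ℝ) (hf : Measurable f) (hf0 : ∀ η, 0 ≤ f η)
    (hfb : ∃ M : ℝ, ∀ η, f η ≤ M) (hf1 : ∫ η, f η ∂ν = 1) :
    ENNReal.ofReal (∫ η, VT T H η * f η ∂ν)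
      ≤ ENNReal.ofReal (Real.log T / 4) *
        ((∑' x : ℤ × ℤ, ∫⁻ η, ENNReal.ofReal
            ((Real.sqrt (f (swapConf x (x + (1, 0)) η)) - Real.sqrt (f η)) ^ 2) ∂ν)
          + ∑' x : ℤ × ℤ, ∫⁻ η, ENNReal.ofReal
              ((Real.sqrt (f (swapConf x (x + (0, 1)) η)) - Real.sqrt (f η)) ^ 2) ∂ν) := by
  obtain ⟨M, hM⟩ := hfb
  set L : ℝ := Real.log T with hLdef
  have hL : 0 < L := Real.log_pos (by linarith)
  set M0 : ℝ := max M 0 with hM0def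
  have hfM0 : ∀ η, f η ≤ M0 := fun η => le_max_of_le_left (hM η)
  have hfabs : ∀ η, |f η| ≤ M0 := fun η =>
    abs_le.2 ⟨by linarith [hf0 η, le_max_right M 0], hfM0 η⟩
  have hM0nn : 0 ≤ M0 := le_max_right M 0
  -- the finite box outside which all coefficients vanish
  obtain ⟨b, hb⟩ := hHc.bddAbove
  rw [mem_upperBounds] at hb
  set R : ℝ := Real.exp (b * L) with hRdef
  have hR0 : 0 ≤ R := (Real.exp_pos _).le
  set N : ℕ := ⌈R⌉₊ with hNdef
  set K : Finset (ℤ × ℤ) := Finset.Icc (-(N : ℤ), -(N : ℤ)) ((N : ℤ), (N : ℤ)) with hKdef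
  have key : ∀ x : ℤ × ℤ, x ∉ K → x ≠ 0 → H (sig T x) = 0 := by
    intro x hxK hx0
    by_contra hH0
    apply hxK
    have hmem : sig T x ∈ tsupport H := subset_tsupport H (Function.mem_support.2 hH0)
    have hsb : sig T x ≤ b := hb _ hmem
    have hne12 : x.1 ≠ 0 ∨ x.2 ≠ 0 := by
      by_contra h
      push_neg at h
      exact hx0 (Prod.ext h.1 h.2)
    have hnsq : 0 < nsq x := by
      unfold nsq
      rcases hne12 with h | h
      · have hx : ((x.1 : ℤ) : ℝ) ≠ 0 := Int.cast_ne_zero.2 h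
        have h1 : 0 < ((x.1 : ℤ) : ℝ) ^ 2 := (sq_nonneg _).lt_of_ne (Ne.symm (pow_ne_zero 2 hx))
        nlinarith [sq_nonneg ((x.2 : ℤ) : ℝ)]
      · have hx : ((x.2 : ℤ) : ℝ) ≠ 0 := Int.cast_ne_zero.2 h
        have h1 : 0 < ((x.2 : ℤ) : ℝ) ^ 2 := (sq_nonneg _).lt_of_ne (Ne.symm (pow_ne_zero 2 hx))
        nlinarith [sq_nonneg ((x.1 : ℤ) : ℝ)]
    have hen : 0 < enorm2 x := Real.sqrt_pos.2 hnsq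
    have hlog : Real.log (enorm2 x) ≤ b * L := by
      have hsig : Real.log (enorm2 x) = sig T x * L := by
        unfold sig
        rw [hLdef]
        exact (div_mul_cancel₀ _ hL.ne').symm
      rw [hsig]
      exact mul_le_mul_of_nonneg_right hsb hL.le
    have henR : enorm2 x ≤ R := by
      rw [← Real.exp_log hen, hRdef]
      exact Real.exp_le_exp.2 hlog
    have hnsqR : nsq x ≤ R ^ 2 := by
      have h1 : nsq x = (enorm2 x) ^ 2 := (Real.sq_sqrt hnsq.le).symm
      rw [h1]
      exact pow_le_pow_left₀ hen.le henR 2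
    have habsR : ∀ m : ℤ, (m : ℝ) ^ 2 ≤ R ^ 2 → -(N : ℤ) ≤ m ∧ m ≤ (N : ℤ) := by
      intro m hm
      have h1 : |(m : ℝ)| ≤ R := by
        calc |(m : ℝ)| = Real.sqrt ((m : ℝ) ^ 2) := (Real.sqrt_sq_eq_abs _).symm
          _ ≤ Real.sqrt (R ^ 2) := Real.sqrt_le_sqrt hm
          _ = R := Real.sqrt_sq hR0
      have hRN : R ≤ (N : ℝ) := Nat.le_ceil R
      have h2 : ((|m| : ℤ) : ℝ) ≤ (((N : ℤ)) : ℝ) := by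
        rw [Int.cast_abs]
        push_cast
        push_cast at h1
        linarith
      have h3 : |m| ≤ (N : ℤ) := by exact_mod_cast h2
      exact abs_le.1 h3
    have hx1 : (x.1 : ℝ) ^ 2 ≤ R ^ 2 := by
      have := hnsqR
      unfold nsq at this
      nlinarith [sq_nonneg ((x.2 : ℤ) : ℝ)]
    have hx2 : (x.2 : ℝ) ^ 2 ≤ R ^ 2 := by
      have := hnsqR
      unfold nsq at this
      nlinarith [sq_nonneg ((x.1 : ℤ) : ℝ)]
    obtain ⟨h1a, h1b⟩ := habsR x.1 hx1
    obtain ⟨h2a, h2b⟩ := habsR x.2 hx2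
    rw [hKdef, Finset.mem_Icc]
    exact ⟨⟨h1a, h2a⟩, ⟨h1b, h2b⟩⟩
  have hcf1z : ∀ x ∉ K, cf1 T H x = 0 := by
    intro x hx
    unfold cf1
    by_cases h0 : x = 0
    · rw [if_pos h0]
    · rw [if_neg h0, key x hx h0, mul_zero]
  have hcf2z : ∀ x ∉ K, cf2 T H x = 0 := by
    intro x hx
    unfold cf2
    by_cases h0 : x = 0
    · rw [if_pos h0]
    · rw [if_neg h0, key x hx h0, mul_zero]
  -- rewrite VT as a finite sum
  have VTeq : ∀ η : Conf, VT T H η =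
      (∑ x ∈ K, cf1 T H x * uu (1, 0) x η) + (∑ x ∈ K, cf2 T H x * uu (0, 1) x η)
      - 1 / L * ((∑ x ∈ K, (cf1 T H x) ^ 2 * (uu (1, 0) x η) ^ 2)
          + (∑ x ∈ K, (cf2 T H x) ^ 2 * (uu (0, 1) x η) ^ 2)) := by
    intro η
    have e1 : (∑' x : ℤ × ℤ, if x ≠ 0 then ((x.1 : ℝ) / nsq x) * H (sig T x) *
        (ind (η (x + (1, 0))) - ind (η x)) else 0) = ∑ x ∈ K, cf1 T H x * uu (1, 0) x η := by
      have hpt : ∀ x : ℤ × ℤ, (if x ≠ 0 then ((x.1 : ℝ) / nsq x) * H (sig T x) *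
          (ind (η (x + (1, 0))) - ind (η x)) else 0) = cf1 T H x * uu (1, 0) x η := by
        intro x
        unfold cf1 uu
        by_cases h0 : x = 0 <;> simp [h0]
      rw [tsum_congr hpt]
      exact tsum_eq_sum fun x hx => by rw [hcf1z x hx, zero_mul]
    have e2 : (∑' x : ℤ × ℤ, if x ≠ 0 then ((x.2 : ℝ) / nsq x) * H (sig T x) *
        (ind (η (x + (0, 1))) - ind (η x)) else 0) = ∑ x ∈ K, cf2 T H x * uu (0, 1) x η := by
      have hpt : ∀ x : ℤ × ℤ, (if x ≠ 0 then ((x.2 : ℝ) / nsq x) * H (sig T x) *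
          (ind (η (x + (0, 1))) - ind (η x)) else 0) = cf2 T H x * uu (0, 1) x η := by
        intro x
        unfold cf2 uu
        by_cases h0 : x = 0 <;> simp [h0]
      rw [tsum_congr hpt]
      exact tsum_eq_sum fun x hx => by rw [hcf2z x hx, zero_mul]
    have q1 : (∑' x : ℤ × ℤ, if x ≠ 0 then (((x.1 : ℝ)) ^ 2 / (nsq x) ^ 2) * (H (sig T x)) ^ 2 *
        (ind (η (x + (1, 0))) - ind (η x)) ^ 2 else 0)
        = ∑ x ∈ K, (cf1 T H x) ^ 2 * (uu (1, 0) x η) ^ 2 := by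
      have hpt : ∀ x : ℤ × ℤ, (if x ≠ 0 then (((x.1 : ℝ)) ^ 2 / (nsq x) ^ 2) * (H (sig T x)) ^ 2 *
          (ind (η (x + (1, 0))) - ind (η x)) ^ 2 else 0)
          = (cf1 T H x) ^ 2 * (uu (1, 0) x η) ^ 2 := by
        intro x
        unfold cf1 uu
        by_cases h0 : x = 0
        · simp [h0]
        · rw [if_pos h0, if_neg h0]
          ring
      rw [tsum_congr hpt]
      exact tsum_eq_sum fun x hx => by rw [hcf1z x hx]; ring
    have q2 : (∑' x : ℤ × ℤ, if x ≠ 0 then (((x.2 : ℝ)) ^ 2 / (nsq x) ^ 2) * (H (sig T x)) ^ 2 *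
        (ind (η (x + (0, 1))) - ind (η x)) ^ 2 else 0)
        = ∑ x ∈ K, (cf2 T H x) ^ 2 * (uu (0, 1) x η) ^ 2 := by
      have hpt : ∀ x : ℤ × ℤ, (if x ≠ 0 then (((x.2 : ℝ)) ^ 2 / (nsq x) ^ 2) * (H (sig T x)) ^ 2 *
          (ind (η (x + (0, 1))) - ind (η x)) ^ 2 else 0)
          = (cf2 T H x) ^ 2 * (uu (0, 1) x η) ^ 2 := by
        intro x
        unfold cf2 uu
        by_cases h0 : x = 0
        · simp [h0]
        · rw [if_pos h0, if_neg h0]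
          ring
      rw [tsum_congr hpt]
      exact tsum_eq_sum fun x hx => by rw [hcf2z x hx]; ring
    unfold VT
    rw [e1, e2, q1, q2, hLdef]
  -- expand the integrand
  have expand : ∀ η : Conf, VT T H η * f η =
      (∑ x ∈ K, (cf1 T H x * uu (1, 0) x η * f η
        - 1 / L * ((cf1 T H x) ^ 2 * (uu (1, 0) x η) ^ 2 * f η)))
      + (∑ x ∈ K, (cf2 T H x * uu (0, 1) x η * f η
        - 1 / L * ((cf2 T H x) ^ 2 * (uu (0, 1) x η) ^ 2 * f η))) := by
    intro η
    rw [VTeq η]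
    rw [Finset.sum_sub_distrib, Finset.sum_sub_distrib]
    simp only [← Finset.sum_mul, ← Finset.mul_sum]
    ring
  -- integrability of the pieces
  have hIa1 : ∀ x : ℤ × ℤ, Integrable (fun η => cf1 T H x * uu (1, 0) x η * f η) ν :=
    fun x => int1 ν _ (uu_meas _ _) (uu_bdd _ _) hf hfabs
  have hIa2 : ∀ x : ℤ × ℤ, Integrable (fun η => cf2 T H x * uu (0, 1) x η * f η) ν :=
    fun x => int1 ν _ (uu_meas _ _) (uu_bdd _ _) hf hfabs
  have hIb1 : ∀ x : ℤ × ℤ, Integrable (fun η => (cf1 T H x) ^ 2 * (uu (1, 0) x η) ^ 2 * f η) ν :=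
    fun x => int2 ν _ (uu_meas _ _) (uu_bdd _ _) hf hfabs
  have hIb2 : ∀ x : ℤ × ℤ, Integrable (fun η => (cf2 T H x) ^ 2 * (uu (0, 1) x η) ^ 2 * f η) ν :=
    fun x => int2 ν _ (uu_meas _ _) (uu_bdd _ _) hf hfabs
  have hIs1 : ∀ x : ℤ × ℤ, Integrable (fun η => cf1 T H x * uu (1, 0) x η * f η
      - 1 / L * ((cf1 T H x) ^ 2 * (uu (1, 0) x η) ^ 2 * f η)) ν :=
    fun x => (hIa1 x).sub (((hIb1 x)).const_mul _)
  have hIs2 : ∀ x : ℤ × ℤ, Integrable (fun η => cf2 T H x * uu (0, 1) x η * f η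
      - 1 / L * ((cf2 T H x) ^ 2 * (uu (0, 1) x η) ^ 2 * f η)) ν :=
    fun x => (hIa2 x).sub (((hIb2 x)).const_mul _)
  -- the integral as a finite sum
  have hIexp : ∫ η, VT T H η * f η ∂ν =
      (∑ x ∈ K, (∫ η, cf1 T H x * uu (1, 0) x η * f η ∂ν
        - 1 / L * ∫ η, (cf1 T H x) ^ 2 * (uu (1, 0) x η) ^ 2 * f η ∂ν))
      + (∑ x ∈ K, (∫ η, cf2 T H x * uu (0, 1) x η * f η ∂ν
        - 1 / L * ∫ η, (cf2 T H x) ^ 2 * (uu (0, 1) x η) ^ 2 * f η ∂ν)) := by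
    rw [integral_congr_ae (Filter.Eventually.of_forall expand)]
    rw [integral_add (integrable_finset_sum K fun x _ => hIs1 x)
      (integrable_finset_sum K fun x _ => hIs2 x)]
    rw [integral_finset_sum K fun x _ => hIs1 x, integral_finset_sum K fun x _ => hIs2 x]
    congr 1 <;> refine Finset.sum_congr rfl fun x _ => ?_
    · rw [integral_sub (hIa1 x) ((hIb1 x).const_mul _), integral_const_mul]
    · rw [integral_sub (hIa2 x) ((hIb2 x).const_mul _), integral_const_mul]
  -- per-site estimate from `core`
  have hcore1 : ∀ x : ℤ × ℤ, ∫ η, cf1 T H x * uu (1, 0) x η * f η ∂ν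
      - 1 / L * ∫ η, (cf1 T H x) ^ 2 * (uu (1, 0) x η) ^ 2 * f η ∂ν
      ≤ L / 4 * ∫ η, (Real.sqrt (f (swapConf x (x + (1, 0)) η)) - Real.sqrt (f η)) ^ 2 ∂ν := by
    intro x
    exact core ν (swapConf x (x + (1, 0))) (swap_meas _ _) (map_swap ν hprod _ _)
      (uu (1, 0) x) (uu_meas _ _) (uu_bdd _ _) (uu_swap _ _ (add_ne_self1 x))
      (cf1 T H x) L hL f hf hf0 M hM
  have hcore2 : ∀ x : ℤ × ℤ, ∫ η, cf2 T H x * uu (0, 1) x η * f η ∂ν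
      - 1 / L * ∫ η, (cf2 T H x) ^ 2 * (uu (0, 1) x η) ^ 2 * f η ∂ν
      ≤ L / 4 * ∫ η, (Real.sqrt (f (swapConf x (x + (0, 1)) η)) - Real.sqrt (f η)) ^ 2 ∂ν := by
    intro x
    exact core ν (swapConf x (x + (0, 1))) (swap_meas _ _) (map_swap ν hprod _ _)
      (uu (0, 1) x) (uu_meas _ _) (uu_bdd _ _) (uu_swap _ _ (add_ne_self2 x))
      (cf2 T H x) L hL f hf hf0 M hM
  -- real-valued bound
  set D1 : (ℤ × ℤ) → ℝ := fun x =>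
    ∫ η, (Real.sqrt (f (swapConf x (x + (1, 0)) η)) - Real.sqrt (f η)) ^ 2 ∂ν with hD1def
  set D2 : (ℤ × ℤ) → ℝ := fun x =>
    ∫ η, (Real.sqrt (f (swapConf x (x + (0, 1)) η)) - Real.sqrt (f η)) ^ 2 ∂ν with hD2def
  have hD1nn : ∀ x, 0 ≤ D1 x := fun x => integral_nonneg fun η => sq_nonneg _
  have hD2nn : ∀ x, 0 ≤ D2 x := fun x => integral_nonneg fun η => sq_nonneg _
  have hreal : ∫ η, VT T H η * f η ∂ν ≤ L / 4 * (∑ x ∈ K, D1 x + ∑ x ∈ K, D2 x) := by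
    rw [hIexp]
    have h1 : (∑ x ∈ K, (∫ η, cf1 T H x * uu (1, 0) x η * f η ∂ν
        - 1 / L * ∫ η, (cf1 T H x) ^ 2 * (uu (1, 0) x η) ^ 2 * f η ∂ν))
        ≤ ∑ x ∈ K, L / 4 * D1 x :=
      Finset.sum_le_sum fun x _ => hcore1 x
    have h2 : (∑ x ∈ K, (∫ η, cf2 T H x * uu (0, 1) x η * f η ∂ν
        - 1 / L * ∫ η, (cf2 T H x) ^ 2 * (uu (0, 1) x η) ^ 2 * f η ∂ν))
        ≤ ∑ x ∈ K, L / 4 * D2 x :=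
      Finset.sum_le_sum fun x _ => hcore2 x
    calc _ ≤ (∑ x ∈ K, L / 4 * D1 x) + ∑ x ∈ K, L / 4 * D2 x := add_le_add h1 h2
      _ = L / 4 * (∑ x ∈ K, D1 x + ∑ x ∈ K, D2 x) := by
          rw [← Finset.mul_sum, ← Finset.mul_sum, mul_add]
  -- pass to ENNReal
  have hDint1 : ∀ x : ℤ × ℤ, Integrable
      (fun η => (Real.sqrt (f (swapConf x (x + (1, 0)) η)) - Real.sqrt (f η)) ^ 2) ν :=
    fun x => intD ν (swap_meas _ _) hf hf0 hM0nn hfM0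
  have hDint2 : ∀ x : ℤ × ℤ, Integrable
      (fun η => (Real.sqrt (f (swapConf x (x + (0, 1)) η)) - Real.sqrt (f η)) ^ 2) ν :=
    fun x => intD ν (swap_meas _ _) hf hf0 hM0nn hfM0
  have hofD1 : ∀ x : ℤ × ℤ, ENNReal.ofReal (D1 x) = ∫⁻ η, ENNReal.ofReal
      ((Real.sqrt (f (swapConf x (x + (1, 0)) η)) - Real.sqrt (f η)) ^ 2) ∂ν :=
    fun x => ofReal_integral_eq_lintegral_ofReal (hDint1 x)
      (Filter.Eventually.of_forall fun η => sq_nonneg _)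
  have hofD2 : ∀ x : ℤ × ℤ, ENNReal.ofReal (D2 x) = ∫⁻ η, ENNReal.ofReal
      ((Real.sqrt (f (swapConf x (x + (0, 1)) η)) - Real.sqrt (f η)) ^ 2) ∂ν :=
    fun x => ofReal_integral_eq_lintegral_ofReal (hDint2 x)
      (Filter.Eventually.of_forall fun η => sq_nonneg _)
  calc ENNReal.ofReal (∫ η, VT T H η * f η ∂ν)
      ≤ ENNReal.ofReal (L / 4 * (∑ x ∈ K, D1 x + ∑ x ∈ K, D2 x)) :=
        ENNReal.ofReal_le_ofReal hreal
    _ = ENNReal.ofReal (L / 4) *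
          ((∑ x ∈ K, ENNReal.ofReal (D1 x)) + ∑ x ∈ K, ENNReal.ofReal (D2 x)) := by
        rw [ENNReal.ofReal_mul (by positivity)]
        rw [ENNReal.ofReal_add (Finset.sum_nonneg fun x _ => hD1nn x)
          (Finset.sum_nonneg fun x _ => hD2nn x)]
        rw [ENNReal.ofReal_sum_of_nonneg fun x _ => hD1nn x,
          ENNReal.ofReal_sum_of_nonneg fun x _ => hD2nn x]
    _ = ENNReal.ofReal (L / 4) *
          ((∑ x ∈ K, ∫⁻ η, ENNReal.ofReal
              ((Real.sqrt (f (swapConf x (x + (1, 0)) η)) - Real.sqrt (f η)) ^ 2) ∂ν)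
            + ∑ x ∈ K, ∫⁻ η, ENNReal.ofReal
              ((Real.sqrt (f (swapConf x (x + (0, 1)) η)) - Real.sqrt (f η)) ^ 2) ∂ν) := by
        congr 1
        rw [Finset.sum_congr rfl fun x _ => hofD1 x, Finset.sum_congr rfl fun x _ => hofD2 x]
    _ ≤ ENNReal.ofReal (Real.log T / 4) *
        ((∑' x : ℤ × ℤ, ∫⁻ η, ENNReal.ofReal
            ((Real.sqrt (f (swapConf x (x + (1, 0)) η)) - Real.sqrt (f η)) ^ 2) ∂ν)
          + ∑' x : ℤ × ℤ, ∫⁻ η, ENNReal.ofReal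
              ((Real.sqrt (f (swapConf x (x + (0, 1)) η)) - Real.sqrt (f η)) ^ 2) ∂ν) := by
        rw [hLdef]
        exact mul_le_mul_right (add_le_add (ENNReal.sum_le_tsum K) (ENNReal.sum_le_tsum K)) _
end
end
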